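/- In a multi-player perfect-information game with probabilistic transitions, countable state space, nonempty finite action sets, and bounded continuous payoff functions, for every player i there exist a strategy σ*_i of player i and an opponent profile σ*_{-i} (a joint choice of strategies of all players other than i) such that for every state s ∈ S, every opponent profile τ_{-i}, and every strategy τ_i of player i: u_i(σ*_i, τ_{-i} | s) ≥ u_i(σ*_i, σ*_{-i} | s) ≥ u_i(τ_i, σ*_{-i} | s). In particular, for every player i and every state s the zero-sum subgame G_i(s) has a value v_i(s) = sup_{τ_i} inf_{τ_{-i}} u_i(τ_i,τ_{-i}|s) = inf_{τ_{-i}} sup_{τ_i} u_i(τ_i,τ_{-i}|s). -/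

import Mathlib

open MeasureTheory

/-- A multi-player perfect-information game with probabilistic transitions:
a set of players `N`, a state space `S` with initial state `init`, a controlling
player `ctrl s` and a nonempty finite action set `act s` for every state `s`, and
a transition probability measure `q s a` for every state `s` and action `a`.
The supports of the transition measures are mutually disjoint and every state is
reachable from the initial state, so every state is reached from `init` via
exactly one finite history (states correspond bijectively to histories). -/
structure PGame (N S A : Type*) where
  init : S
  ctrl : S → N
  act : S → Finset A
  act_nonempty : ∀ s, (act s).Nonempty
  q : S → A → PMF S
  unique_pred : ∀ z s a s' a', a ∈ act s → a' ∈ act s' →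
    z ∈ (q s a).support → z ∈ (q s' a').support → s = s' ∧ a = a'
  init_not_succ : ∀ s a, a ∈ act s → init ∉ (q s a).support
  reach : ∀ z, Relation.ReflTransGen (fun s t => ∃ a ∈ act s, t ∈ (q s a).support) init z

namespace PGame

variable {N S A : Type*} (G : PGame N S A)

/-- A play: an infinite alternating sequence of states and actions, starting at the
initial state, choosing legal actions and moving to successor states. -/
def IsPlay (p : ℕ → S × A) : Prop :=
  (p 0).1 = G.init ∧
    ∀ m, (p m).2 ∈ G.act (p m).1 ∧ (p (m + 1)).1 ∈ (G.q (p m).1 (p m).2).support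

/-- The set of plays of the game. -/
def Play : Type _ := { p : ℕ → S × A // G.IsPlay p }

/-- The set of plays carries the topology generated by the cylinder sets, i.e. the
topology induced by the product of the discrete topologies. -/
instance : TopologicalSpace G.Play :=
  letI : TopologicalSpace S := ⊥
  letI : TopologicalSpace A := ⊥
  inferInstanceAs (TopologicalSpace { p : ℕ → S × A // G.IsPlay p })

/-- The Borel σ-algebra on plays. -/
instance : MeasurableSpace G.Play := borel G.Play

/-- A strategy of player `i`: a choice of a legal action in every state controlled
by `i`. -/
def Strat (i : N) : Type _ := { f : S → A // ∀ s, G.ctrl s = i → f s ∈ G.act s }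

/-- A strategy profile. -/
def Profile : Type _ := ∀ i : N, G.Strat i

/-- The profile `σ` with player `i`'s strategy replaced by `τi`. -/
noncomputable def comb (i : N) (τi : G.Strat i) (σ : G.Profile) : G.Profile :=
  haveI := Classical.decEq N
  Function.update σ i τi

/-- The action that profile `σ` plays in state `s`. -/
def playFun (σ : G.Profile) (s : S) : A := (σ (G.ctrl s)).1 s

/-- The cylinder set of plays agreeing with the play `p0` on the first `n`
coordinates. -/
def cylSet (p0 : G.Play) (n : ℕ) : Set G.Play := { p : G.Play | ∀ m < n, p.1 m = p0.1 m }

open Classical in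
/-- `μ` is the family of Borel probability measures on plays induced by the strategy
profiles via the Ionescu–Tulcea construction applied to `q`; it is uniquely
characterized by the probabilities it assigns to the cylinder sets: actions are
chosen deterministically according to the profile and states are drawn from the
transition probabilities. -/
def IsInducedMeasure (μ : G.Profile → Measure G.Play) : Prop :=
  (∀ σ, IsProbabilityMeasure (μ σ)) ∧
    ∀ (σ : G.Profile) (p0 : G.Play) (n : ℕ),
      μ σ (G.cylSet p0 n) =
        ∏ m ∈ Finset.range n,
          ((if (p0.1 m).2 = G.playFun σ (p0.1 m).1 then 1 else 0) *
            (if m + 1 < n then G.q (p0.1 m).1 (p0.1 m).2 ((p0.1 (m + 1)).1) else 1))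

/-- Expected payoff of player `i` under the profile `σ`: the integral of `u i`
against the induced measure. -/
noncomputable def epay (μ : G.Profile → Measure G.Play) (u : N → G.Play → ℝ)
    (σ : G.Profile) (i : N) : ℝ :=
  ∫ p, u i p ∂(μ σ)

/-- Nash equilibrium: no player can improve his expected payoff by a unilateral
deviation. -/
def IsNash (μ : G.Profile → Measure G.Play) (u : N → G.Play → ℝ) (σ : G.Profile) : Prop :=
  ∀ (i : N) (τi : G.Strat i), G.epay μ u (G.comb i τi σ) i ≤ G.epay μ u σ i

/-- Secure equilibrium: a Nash equilibrium such that no player `i` has a deviation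
keeping his own expected payoff equal, making all opponents weakly worse off, and
making some opponent strictly worse off. -/
def IsSecure (μ : G.Profile → Measure G.Play) (u : N → G.Play → ℝ) (σ : G.Profile) : Prop :=
  G.IsNash μ u σ ∧
    ¬ ∃ (i : N) (τi : G.Strat i),
        G.epay μ u (G.comb i τi σ) i = G.epay μ u σ i ∧
        (∀ j : N, j ≠ i → G.epay μ u (G.comb i τi σ) j ≤ G.epay μ u σ j) ∧
        (∃ k : N, k ≠ i ∧ G.epay μ u (G.comb i τi σ) k < G.epay μ u σ k)

/-- One-step successor relation between states. -/
def step (s t : S) : Prop := ∃ a ∈ G.act s, t ∈ (G.q s a).support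

/-- The set of plays that pass through the state `s` (i.e. the plays extending the
unique history from the initial state to `s`). -/
def through (s : S) : Set G.Play := { p : G.Play | ∃ n, (p.1 n).1 = s }

/-- `E` is the family of subgame expected payoffs: `E σ s i` is the expected payoff
`u_i(σ|s)` of player `i` in the subgame `G(s)` starting from state `s`, under the
profile `σ`.  It is characterized as follows: `E σ s i` only depends on the actions
of `σ` in the subtree rooted at `s`, and for any profile `τ` agreeing with `σ`
there, the integral of `u_i` over the set of plays through `s` under the measure
induced by `τ` equals `E σ s i` times the probability of reaching `s` under `τ`. -/
def IsSubgamePayoff (μ : G.Profile → Measure G.Play) (u : N → G.Play → ℝ)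
    (E : G.Profile → S → N → ℝ) : Prop :=
  ∀ (σ τ : G.Profile) (s : S) (i : N),
    (∀ z, Relation.ReflTransGen G.step s z → G.playFun τ z = G.playFun σ z) →
    ∫ p in G.through s, u i p ∂(μ τ) = E σ s i * (μ τ (G.through s)).toReal
end PGame

namespace PGame
variable {N S A : Type*} (G : PGame N S A)

open Classical
open scoped ENNReal NNReal

/-! ### Tree structure: parents, depth, histories -/

lemma exists_pred {z : S} (hz : z ≠ G.init) :
    ∃ s a, a ∈ G.act s ∧ z ∈ (G.q s a).support := by
  have h := G.reach z
  rcases h.cases_tail with h | ⟨c, _, a, ha, hz'⟩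
  · exact absurd h hz
  · exact ⟨c, a, ha, hz'⟩


open Classical in
/-- The parent of a state (junk at `init`). -/
noncomputable def par (z : S) : S :=
  if h : z = G.init then z else (G.exists_pred h).choose

open Classical in
/-- The action leading from `par z` to `z` (junk at `init`). -/
noncomputable def pact (z : S) : A :=
  if h : z = G.init then (G.act_nonempty z).choose
  else (G.exists_pred h).choose_spec.choose

lemma par_spec {z : S} (hz : z ≠ G.init) :
    G.pact z ∈ G.act (G.par z) ∧ z ∈ (G.q (G.par z) (G.pact z)).support := by
  rw [par, pact, dif_neg hz, dif_neg hz]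
  exact (G.exists_pred hz).choose_spec.choose_spec

lemma ne_init {s : S} {a : A} {z : S} (ha : a ∈ G.act s) (hz : z ∈ (G.q s a).support) :
    z ≠ G.init := fun h => G.init_not_succ s a ha (h ▸ hz)

lemma par_eq {s : S} {a : A} {z : S} (ha : a ∈ G.act s) (hz : z ∈ (G.q s a).support) :
    G.par z = s ∧ G.pact z = a := by
  have hne := G.ne_init ha hz
  have hs := G.par_spec hne
  obtain ⟨h1, h2⟩ := G.unique_pred z _ _ s a hs.1 ha hs.2 hz
  exact ⟨h1, h2⟩

lemma exists_iter_par (z : S) : ∃ n, G.par^[n] z = G.init := by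
  have h := G.reach z
  induction h with
  | refl => exact ⟨0, rfl⟩
  | tail _ h ih =>
    obtain ⟨a, ha, hz⟩ := h
    obtain ⟨n, hn⟩ := ih
    exact ⟨n + 1, by rw [Function.iterate_succ_apply, (G.par_eq ha hz).1, hn]⟩

/-- The depth of a state: the length of the unique history from `init`. -/
noncomputable def depth (z : S) : ℕ := Nat.find (G.exists_iter_par z)

lemma iter_par_depth (z : S) : G.par^[G.depth z] z = G.init :=
  Nat.find_spec (G.exists_iter_par z)

lemma depth_le' {z : S} {n : ℕ} (h : G.par^[n] z = G.init) : G.depth z ≤ n :=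
  Nat.find_le h

lemma depth_init : G.depth G.init = 0 :=
  Nat.eq_zero_of_le_zero (G.depth_le' rfl)

lemma eq_init_of_depth_eq_zero {z : S} (h : G.depth z = 0) : z = G.init := by
  have := G.iter_par_depth z; rwa [h] at this

lemma depth_child {s : S} {a : A} {z : S} (ha : a ∈ G.act s) (hz : z ∈ (G.q s a).support) :
    G.depth z = G.depth s + 1 := by
  have hpar := (G.par_eq ha hz).1
  have hub : G.depth z ≤ G.depth s + 1 :=
    G.depth_le' (by rw [Function.iterate_succ_apply, hpar]; exact G.iter_par_depth s)
  have hne : G.depth z ≠ 0 := fun h => G.ne_init ha hz (G.eq_init_of_depth_eq_zero h)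
  obtain ⟨k, hk⟩ := Nat.exists_eq_succ_of_ne_zero hne
  have : G.par^[k] s = G.init := by
    have := G.iter_par_depth z
    rwa [hk, Function.iterate_succ_apply, hpar] at this
  have := G.depth_le' this
  omega

lemma depth_le_of_rtg {s z : S} (h : Relation.ReflTransGen G.step s z) :
    G.depth s ≤ G.depth z := by
  induction h with
  | refl => exact le_refl _
  | tail _ h ih =>
    obtain ⟨a, ha, hz⟩ := h
    rw [G.depth_child ha hz]; omega

lemma anc_eq_of_rtg {s z : S} (h : Relation.ReflTransGen G.step s z) :
    G.par^[G.depth z - G.depth s] z = s := by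
  induction h with
  | refl => simp
  | @tail b c hbc h ih =>
    obtain ⟨a, ha, hz⟩ := h
    have hd := G.depth_child ha hz
    have hle := G.depth_le_of_rtg hbc
    have heq : G.depth c - G.depth s = (G.depth b - G.depth s) + 1 := by omega
    rw [heq, Function.iterate_succ_apply, (G.par_eq ha hz).1]
    exact ih

lemma rtg_eq_of_depth_eq {s z : S} (h : Relation.ReflTransGen G.step s z)
    (hd : G.depth s = G.depth z) : s = z := by
  have := G.anc_eq_of_rtg h
  rw [← hd, Nat.sub_self, Function.iterate_zero_apply] at this
  exact this.symm

lemma rtg_antisymm {s z : S} (h : Relation.ReflTransGen G.step s z)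
    (h' : Relation.ReflTransGen G.step z s) : s = z :=
  G.rtg_eq_of_depth_eq h (le_antisymm (G.depth_le_of_rtg h) (G.depth_le_of_rtg h'))

lemma depth_par {z : S} (hz : z ≠ G.init) : G.depth (G.par z) + 1 = G.depth z := by
  have hs := G.par_spec hz
  rw [G.depth_child hs.1 hs.2]

lemma depth_iter_par {z : S} {k : ℕ} (hk : k ≤ G.depth z) :
    G.depth (G.par^[k] z) = G.depth z - k := by
  induction k with
  | zero => simp
  | succ k ih =>
    have hk' : k ≤ G.depth z := by omega
    have hne : G.par^[k] z ≠ G.init := by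
      intro h
      have := ih hk'
      rw [h, G.depth_init] at this
      omega
    have := G.depth_par hne
    rw [Function.iterate_succ_apply']
    rw [ih hk'] at this
    omega

lemma rtg_par {z : S} (hz : z ≠ G.init) :
    Relation.ReflTransGen G.step (G.par z) z := by
  have hs := G.par_spec hz
  exact Relation.ReflTransGen.single ⟨_, hs.1, hs.2⟩

lemma rtg_iter_par (z : S) (k : ℕ) (hk : k ≤ G.depth z) :
    Relation.ReflTransGen G.step (G.par^[k] z) z := by
  induction k with
  | zero => exact Relation.ReflTransGen.refl
  | succ k ih =>
    have hk' : k ≤ G.depth z := by omega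
    have hne : G.par^[k] z ≠ G.init := by
      intro h
      have := G.depth_iter_par hk'
      rw [h, G.depth_init] at this
      omega
    rw [Function.iterate_succ_apply']
    exact (G.rtg_par hne).trans (ih hk')


/-! ### Plays -/

lemma play_act (p : G.Play) (m : ℕ) : (p.1 m).2 ∈ G.act (p.1 m).1 := (p.2.2 m).1

lemma play_supp (p : G.Play) (m : ℕ) :
    (p.1 (m + 1)).1 ∈ (G.q (p.1 m).1 (p.1 m).2).support := (p.2.2 m).2

lemma play_par (p : G.Play) (m : ℕ) :
    G.par ((p.1 (m + 1)).1) = (p.1 m).1 ∧ G.pact ((p.1 (m + 1)).1) = (p.1 m).2 :=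
  G.par_eq (G.play_act p m) (G.play_supp p m)

lemma play_depth (p : G.Play) (m : ℕ) : G.depth ((p.1 m).1) = m := by
  induction m with
  | zero => rw [p.2.1, G.depth_init]
  | succ m ih => rw [G.depth_child (G.play_act p m) (G.play_supp p m), ih]

lemma play_rtg (p : G.Play) {m n : ℕ} (h : m ≤ n) :
    Relation.ReflTransGen G.step ((p.1 m).1) ((p.1 n).1) := by
  induction n with
  | zero =>
    have : m = 0 := by omega
    subst this; exact Relation.ReflTransGen.refl
  | succ n ih =>
    rcases Nat.lt_or_ge m (n + 1) with h' | h'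
    · exact (ih (by omega)).tail ⟨(p.1 n).2, G.play_act p n, G.play_supp p n⟩
    · have : m = n + 1 := by omega
      subst this; exact Relation.ReflTransGen.refl

lemma play_state_unique (p p' : G.Play) {n : ℕ} (h : (p.1 n).1 = (p'.1 n).1) :
    ∀ k, k ≤ n → (p.1 (n - k)).1 = (p'.1 (n - k)).1 := by
  intro k
  induction k with
  | zero => intro _; simpa using h
  | succ k ih =>
    intro hk
    have h1 : n - k = (n - (k + 1)) + 1 := by omega
    have h2 := ih (by omega)
    rw [h1] at h2
    rw [← (G.play_par p (n - (k + 1))).1, ← (G.play_par p' (n - (k + 1))).1, h2]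

lemma play_hist_unique (p p' : G.Play) {n : ℕ} (h : (p.1 n).1 = (p'.1 n).1) :
    ∀ m < n, p.1 m = p'.1 m := by
  intro m hm
  have hs : ∀ j, j ≤ n → (p.1 j).1 = (p'.1 j).1 := by
    intro j hj
    have := G.play_state_unique p p' h (n - j) (by omega)
    rwa [Nat.sub_sub_self hj] at this
  have h1 : (p.1 m).1 = (p'.1 m).1 := hs m (by omega)
  have h2 : (p.1 (m + 1)).1 = (p'.1 (m + 1)).1 := hs (m + 1) (by omega)
  have a1 := (G.play_par p m).2
  have a2 := (G.play_par p' m).2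
  have : (p.1 m).2 = (p'.1 m).2 := by rw [← a1, ← a2, h2]
  exact Prod.ext h1 this

/-! ### Construction of plays -/

noncomputable def fwdA (x : S) : A := (G.act_nonempty x).choose

lemma fwdA_mem (x : S) : G.fwdA x ∈ G.act x := (G.act_nonempty x).choose_spec

noncomputable def fwdS (x : S) (a : A) : S := (G.q x a).support_nonempty.choose

lemma fwdS_mem (x : S) (a : A) : G.fwdS x a ∈ (G.q x a).support :=
  (G.q x a).support_nonempty.choose_spec

noncomputable def rayStep (c : S × A) : S × A :=
  (G.fwdS c.1 c.2, G.fwdA (G.fwdS c.1 c.2))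

noncomputable def ray (x : S) (a : A) (k : ℕ) : S × A := (G.rayStep)^[k] (x, a)

lemma ray_zero (x : S) (a : A) : G.ray x a 0 = (x, a) := rfl

lemma ray_succ (x : S) (a : A) (k : ℕ) :
    G.ray x a (k + 1) = G.rayStep (G.ray x a k) := by
  rw [ray, ray, Function.iterate_succ_apply']

lemma ray_act {x : S} {a : A} (ha : a ∈ G.act x) (k : ℕ) :
    (G.ray x a k).2 ∈ G.act (G.ray x a k).1 := by
  cases k with
  | zero => exact ha
  | succ k => rw [G.ray_succ]; exact G.fwdA_mem _

lemma ray_supp (x : S) (a : A) (k : ℕ) :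
    (G.ray x a (k + 1)).1 ∈ (G.q (G.ray x a k).1 (G.ray x a k).2).support := by
  rw [G.ray_succ]
  exact G.fwdS_mem _ _

noncomputable def threadFun (s : S) (a : A) : ℕ → S × A := fun m =>
  if m < G.depth s then (G.par^[G.depth s - m] s, G.pact (G.par^[G.depth s - (m + 1)] s))
  else G.ray s a (m - G.depth s)

lemma iter_par_ne_init {s : S} {k : ℕ} (hk : k < G.depth s) : G.par^[k] s ≠ G.init := by
  intro h
  have := G.depth_iter_par (z := s) (k := k) (by omega)
  rw [h, G.depth_init] at this
  omega

lemma threadFun_isPlay {s : S} {a : A} (ha : a ∈ G.act s) : G.IsPlay (G.threadFun s a) := by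
  constructor
  · unfold threadFun
    rcases Nat.eq_zero_or_pos (G.depth s) with h | h
    · rw [if_neg (by omega)]
      have : s = G.init := G.eq_init_of_depth_eq_zero h
      simpa [ray_zero] using this
    · rw [if_pos h]
      simpa using G.iter_par_depth s
  · intro m
    unfold threadFun
    rcases Nat.lt_or_ge (m + 1) (G.depth s) with h | h
    · -- both inside the history
      rw [if_pos (by omega : m < G.depth s), if_pos h]
      set z := G.par^[G.depth s - (m + 1)] s with hz
      have hzne : z ≠ G.init := G.iter_par_ne_init (by omega)
      have hpz : G.par z = G.par^[G.depth s - m] s := by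
        rw [hz, show G.depth s - m = (G.depth s - (m + 1)) + 1 from by omega,
          Function.iterate_succ_apply']
      have hs := G.par_spec hzne
      refine ⟨by rw [← hpz]; exact hs.1, ?_⟩
      simp only
      have : G.depth s - (m + 1 + 1) + 1 = G.depth s - (m + 1) := by omega
      rw [hpz] at hs
      convert hs.2 using 2
    · rcases Nat.lt_or_ge m (G.depth s) with h2 | h2
      · -- m is the last history index, m + 1 = depth s
        have hm1 : m + 1 = G.depth s := by omega
        rw [if_pos h2, if_neg (by omega)]
        have h3 : G.depth s - m = 1 := by omega
        have h4 : G.depth s - (m + 1) = 0 := by omega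
        have hsne : s ≠ G.init := by
          intro hh
          rw [hh, G.depth_init] at h2
          omega
        have hs := G.par_spec hsne
        rw [h3, h4]
        simp only [Function.iterate_one, Function.iterate_zero_apply]
        have hray : (m + 1) - G.depth s = 0 := by omega
        rw [hray]
        exact ⟨hs.1, hs.2⟩
      · -- both in the ray
        rw [if_neg (by omega), if_neg (by omega)]
        have : m + 1 - G.depth s = (m - G.depth s) + 1 := by omega
        rw [this]
        exact ⟨G.ray_act ha _, G.ray_supp _ _ _⟩

noncomputable def thread {s : S} {a : A} (ha : a ∈ G.act s) : G.Play :=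
  ⟨G.threadFun s a, G.threadFun_isPlay ha⟩

lemma thread_coord {s : S} {a : A} (ha : a ∈ G.act s) :
    (G.thread ha).1 (G.depth s) = (s, a) := by
  show G.threadFun s a (G.depth s) = (s, a)
  unfold threadFun
  rw [if_neg (by omega)]
  simp [ray_zero]

lemma through_eq (s : S) : G.through s = { p : G.Play | (p.1 (G.depth s)).1 = s } := by
  ext p
  constructor
  · rintro ⟨n, hn⟩
    have hd := G.play_depth p n
    rw [hn] at hd
    show (p.1 (G.depth s)).1 = s
    rw [hd]
    exact hn
  · intro h
    exact ⟨_, h⟩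

lemma through_nonempty (s : S) : (G.through s).Nonempty :=
  ⟨G.thread (G.fwdA_mem s), G.depth s, by rw [G.thread_coord]⟩

lemma through_init : G.through G.init = Set.univ := by
  ext p
  simp only [Set.mem_univ, iff_true]
  exact ⟨0, p.2.1⟩

lemma through_subset {s t : S} (h : Relation.ReflTransGen G.step s t) :
    G.through t ⊆ G.through s := by
  intro p hp
  rw [G.through_eq] at hp ⊢
  have h1 : G.par^[G.depth t - G.depth s] ((p.1 (G.depth t)).1) = s := by
    rw [hp]; exact G.anc_eq_of_rtg h
  have h2 := G.play_rtg p (G.depth_le_of_rtg h)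
  -- state at time depth s is the ancestor of state at time depth t
  have h3 := G.anc_eq_of_rtg h2
  rw [G.play_depth, G.play_depth] at h3
  show (p.1 (G.depth s)).1 = s
  rw [← h3]
  exact h1

lemma through_disjoint {s t : S} (hd : G.depth s = G.depth t) (hne : s ≠ t) :
    G.through s ∩ G.through t = ∅ := by
  ext p
  simp only [Set.mem_inter_iff, Set.mem_empty_iff_false, iff_false, not_and]
  rw [G.through_eq, G.through_eq]
  intro h1 h2
  exact hne (by rw [← h1, ← h2, hd])

/-! ### Topology and measurability -/

instance : BorelSpace G.Play := ⟨rfl⟩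

lemma isOpen_coord (m : ℕ) (c : S × A) : IsOpen { p : G.Play | p.1 m = c } := by
  letI : TopologicalSpace S := ⊥
  letI : TopologicalSpace A := ⊥
  haveI : DiscreteTopology S := discreteTopology_bot S
  haveI : DiscreteTopology A := discreteTopology_bot A
  have hc : Continuous (fun p : G.Play => (p.1 : ℕ → S × A)) := continuous_subtype_val
  have : { p : G.Play | p.1 m = c } =
      (fun p : G.Play => (p.1 : ℕ → S × A)) ⁻¹' ((fun f : ℕ → S × A => f m) ⁻¹' {c}) := rfl
  rw [this]
  exact ((continuous_apply m).comp hc).isOpen_preimage _ (isOpen_discrete _)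

lemma isOpen_coord_state (m : ℕ) (t : S) : IsOpen { p : G.Play | (p.1 m).1 = t } := by
  letI : TopologicalSpace S := ⊥
  letI : TopologicalSpace A := ⊥
  haveI : DiscreteTopology S := discreteTopology_bot S
  have hc : Continuous (fun p : G.Play => (p.1 : ℕ → S × A)) := continuous_subtype_val
  have : { p : G.Play | (p.1 m).1 = t } =
      (fun p : G.Play => (p.1 : ℕ → S × A)) ⁻¹'
        ((fun f : ℕ → S × A => (f m).1) ⁻¹' {t}) := rfl
  rw [this]
  exact ((continuous_fst.comp (continuous_apply m)).comp hc).isOpen_preimage _ (isOpen_discrete _)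

lemma measurableSet_coord_state (m : ℕ) (t : S) :
    MeasurableSet { p : G.Play | (p.1 m).1 = t } :=
  (G.isOpen_coord_state m t).measurableSet

lemma measurableSet_through (s : S) : MeasurableSet (G.through s) := by
  rw [G.through_eq]
  exact G.measurableSet_coord_state _ _

lemma measurableSet_cylSet (p0 : G.Play) (n : ℕ) : MeasurableSet (G.cylSet p0 n) := by
  have : G.cylSet p0 n = ⋂ (m : ℕ) (_ : m < n), { p : G.Play | p.1 m = p0.1 m } := by
    ext p
    simp [cylSet]
  rw [this]
  exact MeasurableSet.iInter fun m => MeasurableSet.iInter fun _ =>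
    (G.isOpen_coord m (p0.1 m)).measurableSet

lemma measurable_stateFn [Countable S] (g : S → ℝ) (m : ℕ) :
    Measurable (fun p : G.Play => g ((p.1 m).1)) := by
  intro B _
  have : (fun p : G.Play => g ((p.1 m).1)) ⁻¹' B =
      ⋃ t ∈ { t : S | g t ∈ B }, { p : G.Play | (p.1 m).1 = t } := by
    ext p
    simp
  rw [this]
  exact MeasurableSet.biUnion (Set.to_countable _) fun t _ => G.measurableSet_coord_state m t

/-! ### Measures of cylinders and through-sets -/

lemma cylSet_congr {p0 p1 : G.Play} {n : ℕ} (h : ∀ m < n, p0.1 m = p1.1 m) :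
    G.cylSet p0 n = G.cylSet p1 n := by
  ext p
  constructor <;> intro hp m hm
  · rw [hp m hm]; exact h m hm
  · rw [hp m hm]; exact (h m hm).symm

open Classical in
lemma cyl_formula {μ : G.Profile → Measure G.Play} (hμ : G.IsInducedMeasure μ)
    (σ : G.Profile) (p0 : G.Play) (n : ℕ) :
    μ σ (G.cylSet p0 n) =
      (∏ m ∈ Finset.range n, (if (p0.1 m).2 = G.playFun σ ((p0.1 m).1) then (1 : ℝ≥0∞) else 0)) *
      ∏ m ∈ Finset.range (n - 1), G.q (p0.1 m).1 (p0.1 m).2 ((p0.1 (m + 1)).1) := by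
  rw [hμ.2 σ p0 n, Finset.prod_mul_distrib]
  congr 1
  cases n with
  | zero => simp
  | succ k =>
    rw [Finset.prod_range_succ, if_neg (by omega), Nat.add_sub_cancel, mul_one]
    apply Finset.prod_congr rfl
    intro m hm
    rw [if_pos (by simp at hm; omega)]

/-- The canonical play through a state. -/
noncomputable def canon (t : S) : G.Play := G.thread (G.fwdA_mem t)

lemma canon_state (t : S) : ((G.canon t).1 (G.depth t)).1 = t := by
  rw [canon, G.thread_coord]

lemma thread_coord_lt {t : S} {b : A} (hb : b ∈ G.act t) {m : ℕ} (hm : m < G.depth t) :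
    (G.thread hb).1 m = (G.canon t).1 m := by
  show G.threadFun t b m = G.threadFun t (G.fwdA t) m
  unfold threadFun
  rw [if_pos hm, if_pos hm]

/-- The probability that a profile reaches a state, in closed form. -/
noncomputable def hw (σ : G.Profile) (t : S) : ℝ≥0∞ :=
  (∏ m ∈ Finset.range (G.depth t),
      (if ((G.canon t).1 m).2 = G.playFun σ (((G.canon t).1 m).1) then (1 : ℝ≥0∞) else 0)) *
  ∏ m ∈ Finset.range (G.depth t),
      G.q ((G.canon t).1 m).1 ((G.canon t).1 m).2 (((G.canon t).1 (m + 1)).1)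

lemma cyl_thread {μ : G.Profile → Measure G.Play} (hμ : G.IsInducedMeasure μ)
    (σ : G.Profile) {t : S} {b : A} (hb : b ∈ G.act t) :
    μ σ (G.cylSet (G.thread hb) (G.depth t + 1)) =
      G.hw σ t * (if b = G.playFun σ t then 1 else 0) := by
  classical
  rw [G.cyl_formula hμ σ _ (G.depth t + 1), Nat.add_sub_cancel]
  rw [Finset.prod_range_succ]
  have hc : (G.thread hb).1 (G.depth t) = (t, b) := G.thread_coord hb
  have h1 : ∀ m ∈ Finset.range (G.depth t),
      (if ((G.thread hb).1 m).2 = G.playFun σ (((G.thread hb).1 m).1) then (1 : ℝ≥0∞) else 0) =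
      (if ((G.canon t).1 m).2 = G.playFun σ (((G.canon t).1 m).1) then (1 : ℝ≥0∞) else 0) := by
    intro m hm
    rw [G.thread_coord_lt hb (Finset.mem_range.1 hm)]
  have h2 : ∀ m ∈ Finset.range (G.depth t),
      G.q ((G.thread hb).1 m).1 ((G.thread hb).1 m).2 (((G.thread hb).1 (m + 1)).1) =
      G.q ((G.canon t).1 m).1 ((G.canon t).1 m).2 (((G.canon t).1 (m + 1)).1) := by
    intro m hm
    have hm' := Finset.mem_range.1 hm
    rcases Nat.lt_or_ge (m + 1) (G.depth t) with h | h
    · rw [G.thread_coord_lt hb hm', G.thread_coord_lt hb h]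
    · have : m + 1 = G.depth t := by omega
      rw [G.thread_coord_lt hb hm', this, hc]
      have : ((G.canon t).1 (G.depth t)).1 = t := G.canon_state t
      rw [this]
  rw [Finset.prod_congr rfl h1, Finset.prod_congr rfl h2, hc]
  show _ * _ * _ = _
  rw [hw]
  ring

lemma through_eq_iUnion_cyl (t : S) :
    G.through t = ⋃ b : {b : A // b ∈ G.act t}, G.cylSet (G.thread b.2) (G.depth t + 1) := by
  ext p
  constructor
  · intro hp
    rw [G.through_eq] at hp
    have hb : (p.1 (G.depth t)).2 ∈ G.act t := by
      have := G.play_act p (G.depth t)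
      rwa [hp] at this
    refine Set.mem_iUnion.2 ⟨⟨_, hb⟩, ?_⟩
    intro m hm
    rcases Nat.lt_or_ge m (G.depth t) with h | h
    · have hstate : (p.1 (G.depth t)).1 = ((G.thread hb).1 (G.depth t)).1 := by
        rw [hp, G.thread_coord]
      exact G.play_hist_unique p (G.thread hb) hstate m h
    · have : m = G.depth t := by omega
      subst this
      rw [G.thread_coord]
      exact Prod.ext hp rfl
  · intro hp
    obtain ⟨b, hb⟩ := Set.mem_iUnion.1 hp
    have := hb (G.depth t) (by omega)
    rw [G.through_eq]
    show (p.1 (G.depth t)).1 = t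
    rw [this, G.thread_coord]

lemma meas_through {μ : G.Profile → Measure G.Play} (hμ : G.IsInducedMeasure μ)
    (σ : G.Profile) (t : S) : μ σ (G.through t) = G.hw σ t := by
  classical
  rw [G.through_eq_iUnion_cyl t]
  rw [measure_iUnion ?_ (fun b => G.measurableSet_cylSet _ _)]
  · have : ∀ b : {b : A // b ∈ G.act t},
        μ σ (G.cylSet (G.thread b.2) (G.depth t + 1)) =
        G.hw σ t * (if b.1 = G.playFun σ t then 1 else 0) := fun b => G.cyl_thread hμ σ b.2
    rw [tsum_congr this, tsum_fintype]
    have hmem : G.playFun σ t ∈ G.act t := (σ (G.ctrl t)).2 t rfl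
    have e1 : ∀ b : {b : A // b ∈ G.act t},
        G.hw σ t * (if (b : A) = G.playFun σ t then (1 : ℝ≥0∞) else 0) =
        (if (b : A) = G.playFun σ t then G.hw σ t else 0) := by
      intro b; split_ifs <;> simp
    rw [Finset.sum_congr rfl (fun b _ => e1 b)]
    rw [Finset.sum_coe_sort (G.act t) (fun b => if b = G.playFun σ t then G.hw σ t else 0)]
    rw [Finset.sum_ite_eq' (G.act t) (G.playFun σ t) (fun _ => G.hw σ t), if_pos hmem]
  · intro b b' hbb'
    apply Set.disjoint_left.2
    intro p hp hp'
    apply hbb'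
    have h1 := hp (G.depth t) (by omega)
    have h2 := hp' (G.depth t) (by omega)
    rw [G.thread_coord] at h1
    rw [G.thread_coord] at h2
    apply Subtype.ext
    have := h1.symm.trans h2
    exact (Prod.ext_iff.1 this).2

lemma hw_child {σ : G.Profile} {t : S} {a : A} {t' : S}
    (ha : a ∈ G.act t) (ht' : t' ∈ (G.q t a).support) :
    G.hw σ t' = G.hw σ t * (if a = G.playFun σ t then 1 else 0) * G.q t a t' := by
  have hd : G.depth t' = G.depth t + 1 := G.depth_child ha ht'
  have hpar : G.par t' = t := (G.par_eq ha ht').1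
  have hpact : G.pact t' = a := (G.par_eq ha ht').2
  set n := G.depth t with hn
  -- coordinates of canon t' below n agree with those of canon t
  have hcoord : ∀ m < n, (G.canon t').1 m = (G.canon t).1 m := by
    intro m hm
    show G.threadFun t' (G.fwdA t') m = G.threadFun t (G.fwdA t) m
    unfold threadFun
    rw [if_pos (by omega), if_pos (by omega)]
    have e1 : G.depth t' - m = (G.depth t - m) + 1 := by omega
    have e2 : G.depth t' - (m + 1) = (G.depth t - (m + 1)) + 1 := by omega
    rw [e1, e2, Function.iterate_succ_apply, Function.iterate_succ_apply, hpar]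
  have hcn : (G.canon t').1 n = (t, a) := by
    show G.threadFun t' (G.fwdA t') n = (t, a)
    unfold threadFun
    rw [if_pos (by omega)]
    have e1 : G.depth t' - n = 1 := by omega
    have e2 : G.depth t' - (n + 1) = 0 := by omega
    rw [e1, e2]
    simp [hpar, hpact]
  have hcn' : ((G.canon t').1 (n + 1)).1 = t' := by
    have := G.canon_state t'
    rwa [hd] at this
  rw [hw, hw, hd]
  rw [Finset.prod_range_succ, Finset.prod_range_succ]
  have h1 : ∀ m ∈ Finset.range n,
      (if ((G.canon t').1 m).2 = G.playFun σ (((G.canon t').1 m).1) then (1 : ℝ≥0∞) else 0) =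
      (if ((G.canon t).1 m).2 = G.playFun σ (((G.canon t).1 m).1) then (1 : ℝ≥0∞) else 0) := by
    intro m hm
    rw [hcoord m (Finset.mem_range.1 hm)]
  have h2 : ∀ m ∈ Finset.range n,
      G.q ((G.canon t').1 m).1 ((G.canon t').1 m).2 (((G.canon t').1 (m + 1)).1) =
      G.q ((G.canon t).1 m).1 ((G.canon t).1 m).2 (((G.canon t).1 (m + 1)).1) := by
    intro m hm
    have hm' := Finset.mem_range.1 hm
    rcases Nat.lt_or_ge (m + 1) n with h | h
    · rw [hcoord m hm', hcoord (m + 1) h]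
    · have : m + 1 = n := by omega
      rw [hcoord m hm', this, hcn, G.canon_state t]
  rw [Finset.prod_congr rfl h1, Finset.prod_congr rfl h2, hcn, hcn']
  show _ * _ * (_ * _) = _
  ring

lemma meas_through_child {μ : G.Profile → Measure G.Play} (hμ : G.IsInducedMeasure μ)
    (σ : G.Profile) {t : S} {a : A} {t' : S}
    (ha : a ∈ G.act t) (ht' : t' ∈ (G.q t a).support) :
    μ σ (G.through t') =
      μ σ (G.through t) * (if a = G.playFun σ t then 1 else 0) * G.q t a t' := by
  rw [G.meas_through hμ, G.meas_through hμ, G.hw_child ha ht']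

/-! ### Slices: level decomposition of through-sets -/

open Classical in
/-- The set of plays through `s` whose state at time `ℓ` is `t`. -/
noncomputable def slice (s : S) (ℓ : ℕ) (t : S) : Set G.Play :=
  if G.depth t = ℓ ∧ Relation.ReflTransGen G.step s t then G.through t else ∅

lemma slice_measurable (s : S) (ℓ : ℕ) (t : S) : MeasurableSet (G.slice s ℓ t) := by
  unfold slice
  split_ifs
  · exact G.measurableSet_through t
  · exact MeasurableSet.empty

lemma slice_disjoint (s : S) (ℓ : ℕ) : Pairwise (Function.onFun Disjoint (G.slice s ℓ)) := by
  intro t t' htt'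
  unfold Function.onFun slice
  split_ifs with h h'
  · rw [Set.disjoint_iff_inter_eq_empty]
    exact G.through_disjoint (h.1.trans h'.1.symm) htt'
  · exact Set.disjoint_empty _
  · exact Set.empty_disjoint _
  · exact Set.empty_disjoint _

lemma slice_iUnion (s : S) {ℓ : ℕ} (hℓ : G.depth s ≤ ℓ) :
    (⋃ t : S, G.slice s ℓ t) = G.through s := by
  ext p
  constructor
  · intro hp
    obtain ⟨t, ht⟩ := Set.mem_iUnion.1 hp
    unfold slice at ht
    split_ifs at ht with h
    · exact G.through_subset h.2 ht
    · exact absurd ht (Set.notMem_empty p)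
  · intro hp
    rw [G.through_eq] at hp
    refine Set.mem_iUnion.2 ⟨(p.1 ℓ).1, ?_⟩
    unfold slice
    rw [if_pos ⟨G.play_depth p ℓ, by
      have := G.play_rtg p hℓ
      rwa [hp] at this⟩]
    exact ⟨ℓ, rfl⟩

lemma meas_slice_sum [Countable S] {μ : G.Profile → Measure G.Play} (hμ : G.IsInducedMeasure μ)
    (σ : G.Profile) (s : S) {ℓ : ℕ} (hℓ : G.depth s ≤ ℓ) :
    μ σ (G.through s) = ∑' t : S, μ σ (G.slice s ℓ t) := by
  rw [← G.slice_iUnion s hℓ]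
  exact measure_iUnion (G.slice_disjoint s ℓ) (G.slice_measurable s ℓ)

lemma integral_slice_sum [Countable S] {μ : G.Profile → Measure G.Play} (hμ : G.IsInducedMeasure μ)
    (σ : G.Profile) {g : G.Play → ℝ} (hg : MeasureTheory.Integrable g (μ σ))
    (s : S) {ℓ : ℕ} (hℓ : G.depth s ≤ ℓ) :
    ∫ p in G.through s, g p ∂(μ σ) = ∑' t : S, ∫ p in G.slice s ℓ t, g p ∂(μ σ) := by
  rw [← G.slice_iUnion s hℓ]
  exact MeasureTheory.integral_iUnion (G.slice_measurable s ℓ) (G.slice_disjoint s ℓ)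
    hg.integrableOn

/-! ### Strategies: defaults, reaching profiles -/

noncomputable def dflt (j : N) : G.Strat j := ⟨fun z => G.fwdA z, fun z _ => G.fwdA_mem z⟩

noncomputable def dfltProfile : G.Profile := fun j => G.dflt j

instance (j : N) : Nonempty (G.Strat j) := ⟨G.dflt j⟩

instance : Nonempty G.Profile := ⟨G.dfltProfile⟩

lemma playFun_mem_act (σ : G.Profile) (s : S) : G.playFun σ s ∈ G.act s :=
  (σ (G.ctrl s)).2 s rfl

lemma depth_lt_of_rtg_ne {z s : S} (h : Relation.ReflTransGen G.step z s) (hne : z ≠ s) :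
    G.depth z < G.depth s := by
  rcases Nat.lt_or_ge (G.depth z) (G.depth s) with h' | h'
  · exact h'
  · exact absurd (G.rtg_eq_of_depth_eq h (by
      have := G.depth_le_of_rtg h
      omega)) hne

/-- For `z` a strict ancestor of `s`, the child of `z` in the direction of `s`. -/
noncomputable def toward (s z : S) : S := G.par^[G.depth s - G.depth z - 1] s

lemma toward_spec {s z : S} (h : Relation.ReflTransGen G.step z s) (hne : z ≠ s) :
    G.par (G.toward s z) = z ∧ G.toward s z ≠ G.init := by
  have hlt := G.depth_lt_of_rtg_ne h hne
  constructor
  · have := G.anc_eq_of_rtg h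
    rw [show G.depth s - G.depth z = (G.depth s - G.depth z - 1) + 1 from by omega,
      Function.iterate_succ_apply'] at this
    exact this
  · intro hinit
    rw [toward] at hinit
    have := G.depth_iter_par (z := s) (k := G.depth s - G.depth z - 1) (by omega)
    rw [hinit, G.depth_init] at this
    omega

lemma toward_mem {s z : S} (h : Relation.ReflTransGen G.step z s) (hne : z ≠ s) :
    G.pact (G.toward s z) ∈ G.act z ∧
      G.toward s z ∈ (G.q z (G.pact (G.toward s z))).support := by
  obtain ⟨hpar, hnin⟩ := G.toward_spec h hne
  have := G.par_spec hnin
  rw [hpar] at this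
  exact this

open Classical in
/-- The profile that plays towards `s` along the history of `s` and plays like `σ`
in the subtree of `s` (and elsewhere). -/
noncomputable def reachTo (s : S) (σ : G.Profile) : G.Profile := fun j =>
  ⟨fun z =>
    if Relation.ReflTransGen G.step s z then (σ j).1 z
    else if Relation.ReflTransGen G.step z s ∧ z ≠ s then G.pact (G.toward s z)
    else (σ j).1 z,
   by
    intro z hz
    dsimp only
    split_ifs with h1 h2
    · exact (σ j).2 z hz
    · exact (G.toward_mem h2.1 h2.2).1
    · exact (σ j).2 z hz⟩

lemma reachTo_agree (s : S) (σ : G.Profile) {z : S} (h : Relation.ReflTransGen G.step s z) :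
    G.playFun (G.reachTo s σ) z = G.playFun σ z := by
  show (if _ then _ else _) = _
  rw [if_pos h]
  rfl

lemma reachTo_anc (s : S) (σ : G.Profile) {z : S}
    (h : Relation.ReflTransGen G.step z s) (hne : z ≠ s) :
    G.playFun (G.reachTo s σ) z = G.pact (G.toward s z) := by
  have hns : ¬ Relation.ReflTransGen G.step s z := by
    intro h'
    exact hne (G.rtg_antisymm h h')
  show (if _ then _ else _) = _
  rw [if_neg hns, if_pos ⟨h, hne⟩]

lemma meas_reachTo_pos {μ : G.Profile → Measure G.Play} (hμ : G.IsInducedMeasure μ)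
    (σ : G.Profile) (s : S) : μ (G.reachTo s σ) (G.through s) ≠ 0 := by
  haveI := hμ.1 (G.reachTo s σ)
  set τ := G.reachTo s σ with hτ
  have key : ∀ j, j ≤ G.depth s → μ τ (G.through (G.par^[G.depth s - j] s)) ≠ 0 := by
    intro j
    induction j with
    | zero =>
      intro _
      rw [Nat.sub_zero, G.iter_par_depth, G.through_init]
      simp
    | succ j ih =>
      intro hj
      set z' := G.par^[G.depth s - (j + 1)] s with hz'
      have hz'd : G.depth z' = j + 1 := by
        rw [hz', G.depth_iter_par (by omega)]; omega
      have hz'ne : z' ≠ G.init := by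
        intro h; rw [h, G.depth_init] at hz'd; omega
      have hpz : G.par z' = G.par^[G.depth s - j] s := by
        rw [hz', show G.depth s - j = (G.depth s - (j + 1)) + 1 from by omega,
          Function.iterate_succ_apply']
      set z := G.par^[G.depth s - j] s with hz
      have hzd : G.depth z = j := by rw [hz, G.depth_iter_par (by omega)]; omega
      have hs := G.par_spec hz'ne
      rw [hpz] at hs
      have hchild := G.meas_through_child hμ τ hs.1 hs.2
      -- `z` is a strict ancestor of `s`
      have hzs : Relation.ReflTransGen G.step z s := G.rtg_iter_par s _ (by omega)
      have hzne : z ≠ s := by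
        intro h
        rw [h] at hzd
        omega
      have htow : G.toward s z = z' := by
        rw [toward, hzd, hz']
        congr 1
      have hplay : G.playFun τ z = G.pact z' := by
        rw [hτ, G.reachTo_anc s σ hzs hzne, htow]
      rw [hplay] at hchild
      rw [hchild, if_pos rfl, mul_one]
      apply mul_ne_zero (ih (by omega))
      exact (G.q z (G.pact z')).mem_support_iff z' |>.1 hs.2
  have := key (G.depth s) (le_refl _)
  rwa [Nat.sub_self, Function.iterate_zero_apply] at this

lemma meas_reachTo_toReal_pos {μ : G.Profile → Measure G.Play} (hμ : G.IsInducedMeasure μ)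
    (σ : G.Profile) (s : S) : 0 < (μ (G.reachTo s σ) (G.through s)).toReal := by
  haveI := hμ.1 (G.reachTo s σ)
  exact ENNReal.toReal_pos (G.meas_reachTo_pos hμ σ s) (measure_ne_top _ _)

/-! ### Properties of the subgame payoff function -/

lemma E_congr {μ : G.Profile → Measure G.Play} (hμ : G.IsInducedMeasure μ)
    {u : N → G.Play → ℝ} {E : G.Profile → S → N → ℝ} (hE : G.IsSubgamePayoff μ u E)
    {σ σ' : G.Profile} {s : S} (i : N)
    (h : ∀ z, Relation.ReflTransGen G.step s z → G.playFun σ z = G.playFun σ' z) :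
    E σ s i = E σ' s i := by
  set τ := G.reachTo s σ with hτ
  have h1 : ∀ z, Relation.ReflTransGen G.step s z → G.playFun τ z = G.playFun σ z :=
    fun z hz => G.reachTo_agree s σ hz
  have h2 : ∀ z, Relation.ReflTransGen G.step s z → G.playFun τ z = G.playFun σ' z :=
    fun z hz => (h1 z hz).trans (h z hz)
  have e1 := hE σ τ s i h1
  have e2 := hE σ' τ s i h2
  have hw := G.meas_reachTo_toReal_pos hμ σ s
  have := e1.symm.trans e2
  exact mul_right_cancel₀ (ne_of_gt hw) this

lemma integrable_bdd {μ : G.Profile → Measure G.Play} (hμ : G.IsInducedMeasure μ)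
    (σ : G.Profile) {g : G.Play → ℝ} (hg : Measurable g) {C : ℝ} (hC : ∀ p, |g p| ≤ C) :
    MeasureTheory.Integrable g (μ σ) := by
  haveI := hμ.1 σ
  exact (MeasureTheory.integrable_const C).mono' hg.aestronglyMeasurable
    (Filter.Eventually.of_forall fun p => by simpa [Real.norm_eq_abs] using hC p)

lemma child_cond {s t : S} (hd : G.depth t = G.depth s + 1)
    (h : Relation.ReflTransGen G.step s t) :
    G.pact t ∈ G.act s ∧ t ∈ (G.q s (G.pact t)).support := by
  have hne : t ≠ G.init := by
    intro hh
    rw [hh, G.depth_init] at hd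
    omega
  have hpar : G.par t = s := by
    have := G.anc_eq_of_rtg h
    rw [hd] at this
    simpa using this
  have := G.par_spec hne
  rwa [hpar] at this

lemma cond_of_child {s t : S} {a : A} (ha : a ∈ G.act s) (ht : t ∈ (G.q s a).support) :
    G.depth t = G.depth s + 1 ∧ Relation.ReflTransGen G.step s t :=
  ⟨G.depth_child ha ht, Relation.ReflTransGen.single ⟨a, ha, ht⟩⟩

lemma q_ne_top (s : S) (a : A) (t : S) : G.q s a t ≠ ⊤ :=
  LT.lt.ne (lt_of_le_of_lt ((G.q s a).coe_le_one t) ENNReal.one_lt_top)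

/-- The one-step (Bellman) equation for the subgame payoff. -/
lemma E_step [Countable S] {μ : G.Profile → Measure G.Play} (hμ : G.IsInducedMeasure μ)
    {u : N → G.Play → ℝ} {E : G.Profile → S → N → ℝ} (hE : G.IsSubgamePayoff μ u E)
    {i : N} (hui : Measurable (u i)) {C : ℝ} (hC : ∀ p, |u i p| ≤ C)
    (σ : G.Profile) (s : S) :
    E σ s i = ∑' t : S, (G.q s (G.playFun σ s) t).toReal * E σ t i := by
  classical
  set τ := G.reachTo s σ with hτ
  haveI := hμ.1 τ
  have hagree : ∀ z, Relation.ReflTransGen G.step s z → G.playFun τ z = G.playFun σ z :=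
    fun z hz => G.reachTo_agree s σ hz
  have hint : MeasureTheory.Integrable (u i) (μ τ) := G.integrable_bdd hμ τ hui hC
  have hdec := G.integral_slice_sum hμ τ hint s (ℓ := G.depth s + 1) (by omega)
  have hEs := hE σ τ s i hagree
  set a₀ := G.playFun σ s with ha₀
  have ha₀s : G.playFun τ s = a₀ := hagree s Relation.ReflTransGen.refl
  have hterm : ∀ t : S,
      (∫ p in G.slice s (G.depth s + 1) t, u i p ∂(μ τ)) =
      (μ τ (G.through s)).toReal * ((G.q s a₀ t).toReal * E σ t i) := by
    intro t
    unfold slice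
    split_ifs with hcond
    · obtain ⟨hact, hsupp⟩ := G.child_cond hcond.1 hcond.2
      have hEt := hE σ τ t i (fun z hz => hagree z (hcond.2.trans hz))
      rw [hEt]
      have := G.meas_through_child hμ τ hact hsupp
      rw [ha₀s] at this
      rw [this]
      by_cases hpa : G.pact t = a₀
      · rw [hpa, if_pos rfl, mul_one, ENNReal.toReal_mul]
        ring
      · have hq0 : G.q s a₀ t = 0 := by
          by_contra hq
          have hts : t ∈ (G.q s a₀).support := hq
          exact hpa (G.par_eq (G.playFun_mem_act σ s) hts).2
        rw [if_neg hpa, hq0]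
        simp
    · have hq0 : G.q s a₀ t = 0 := by
        by_contra hq
        have hts : t ∈ (G.q s a₀).support := hq
        exact hcond (G.cond_of_child (G.playFun_mem_act σ s) hts)
      rw [MeasureTheory.setIntegral_empty, hq0]
      simp
  rw [hEs, tsum_congr hterm, tsum_mul_left] at hdec
  exact mul_left_cancel₀ (ne_of_gt (G.meas_reachTo_toReal_pos hμ σ s)) (by
    rw [mul_comm (E σ s i) _] at hdec
    exact hdec)

/-! ### Oscillation and payoff bounds -/

/-- Oscillation of the payoff over the plays through a state. -/
noncomputable def osc (u : G.Play → ℝ) (t : S) : ℝ :=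
  sSup (u '' G.through t) - sInf (u '' G.through t)

section Bounds

variable {u : G.Play → ℝ} {C : ℝ} (hC : ∀ p, |u p| ≤ C)

include hC

lemma bddAbove_im (t : S) : BddAbove (u '' G.through t) :=
  ⟨C, by rintro x ⟨p, _, rfl⟩; exact (abs_le.1 (hC p)).2⟩

lemma bddBelow_im (t : S) : BddBelow (u '' G.through t) :=
  ⟨-C, by rintro x ⟨p, _, rfl⟩; exact (abs_le.1 (hC p)).1⟩

lemma sSup_le_C (t : S) : sSup (u '' G.through t) ≤ C :=
  csSup_le ((G.through_nonempty t).image u) (by rintro x ⟨p, _, rfl⟩; exact (abs_le.1 (hC p)).2)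

lemma neg_C_le_sInf (t : S) : -C ≤ sInf (u '' G.through t) :=
  le_csInf ((G.through_nonempty t).image u) (by rintro x ⟨p, _, rfl⟩; exact (abs_le.1 (hC p)).1)

lemma sInf_le_sSup_im (t : S) : sInf (u '' G.through t) ≤ sSup (u '' G.through t) :=
  csInf_le_csSup ((G.through_nonempty t).image u) (G.bddBelow_im hC t) (G.bddAbove_im hC t)

lemma osc_nonneg (t : S) : 0 ≤ G.osc u t := sub_nonneg.2 (G.sInf_le_sSup_im hC t)

lemma osc_le (t : S) : G.osc u t ≤ 2 * C := by
  have h1 := G.sSup_le_C hC t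
  have h2 := G.neg_C_le_sInf hC t
  unfold osc
  linarith

lemma mem_interval_of_through {t : S} {p : G.Play} (hp : p ∈ G.through t) :
    sInf (u '' G.through t) ≤ u p ∧ u p ≤ sSup (u '' G.through t) :=
  ⟨csInf_le (G.bddBelow_im hC t) ⟨p, hp, rfl⟩, le_csSup (G.bddAbove_im hC t) ⟨p, hp, rfl⟩⟩

end Bounds

section EBounds

variable {μ : G.Profile → Measure G.Play} {u : N → G.Play → ℝ} {E : G.Profile → S → N → ℝ}
  {i : N} {C : ℝ}

/-- The subgame payoff lies between the extreme payoffs achievable through `t`. -/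
lemma E_mem_interval [Countable S] (hμ : G.IsInducedMeasure μ) (hE : G.IsSubgamePayoff μ u E)
    (hui : Measurable (u i)) (hC : ∀ p, |u i p| ≤ C) (σ : G.Profile) (t : S) :
    sInf (u i '' G.through t) ≤ E σ t i ∧ E σ t i ≤ sSup (u i '' G.through t) := by
  set τ := G.reachTo t σ with hτ
  haveI := hμ.1 τ
  have hEt := hE σ τ t i (fun z hz => G.reachTo_agree t σ hz)
  have hw := G.meas_reachTo_toReal_pos hμ σ t
  have hint : MeasureTheory.Integrable (u i) (μ τ) := G.integrable_bdd hμ τ hui hC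
  have hmeas := G.measurableSet_through t
  constructor
  · have hlow : sInf (u i '' G.through t) * (μ τ (G.through t)).toReal ≤
        ∫ p in G.through t, u i p ∂(μ τ) := by
      have := MeasureTheory.setIntegral_mono_on
        (MeasureTheory.integrableOn_const (measure_ne_top _ _))
        hint.integrableOn hmeas
        (fun p hp => (G.mem_interval_of_through hC hp).1)
      rw [MeasureTheory.setIntegral_const, smul_eq_mul, mul_comm] at this
      exact this
    rw [hEt] at hlow
    exact le_of_mul_le_mul_right (by rwa [mul_comm (E σ t i) _] at hlow ⊢) hw
  · have hup : ∫ p in G.through t, u i p ∂(μ τ) ≤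
        sSup (u i '' G.through t) * (μ τ (G.through t)).toReal := by
      have := MeasureTheory.setIntegral_mono_on hint.integrableOn
        (MeasureTheory.integrableOn_const (measure_ne_top _ _))
        hmeas (fun p hp => (G.mem_interval_of_through hC hp).2)
      rw [MeasureTheory.setIntegral_const, smul_eq_mul, mul_comm] at this
      exact this
    rw [hEt] at hup
    exact le_of_mul_le_mul_right (by rwa [mul_comm (E σ t i) _] at hup ⊢) hw

lemma abs_E_le [Countable S] (hμ : G.IsInducedMeasure μ) (hE : G.IsSubgamePayoff μ u E)
    (hui : Measurable (u i)) (hC : ∀ p, |u i p| ≤ C) (σ : G.Profile) (t : S) :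
    |E σ t i| ≤ C := by
  have h := G.E_mem_interval hμ hE hui hC σ t
  have h1 := G.sSup_le_C hC t
  have h2 := G.neg_C_le_sInf hC t
  rw [abs_le]
  constructor <;> linarith

end EBounds

/-! ### The lower value and the Bellman operator -/

/-- One-step expected value of `f` after playing `a` at `s`. -/
noncomputable def qsum (s : S) (a : A) (f : S → ℝ) : ℝ := ∑' t : S, (G.q s a t).toReal * f t

lemma q_toReal_tsum (s : S) (a : A) : ∑' t : S, (G.q s a t).toReal = 1 := by
  rw [← ENNReal.tsum_toReal_eq (fun t => G.q_ne_top s a t), (G.q s a).tsum_coe,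
    ENNReal.toReal_one]

lemma summable_q (s : S) (a : A) : Summable fun t : S => (G.q s a t).toReal :=
  ENNReal.summable_toReal (by rw [(G.q s a).tsum_coe]; exact ENNReal.one_ne_top)

lemma summable_qmul (s : S) (a : A) {f : S → ℝ} {C : ℝ} (hf : ∀ t, |f t| ≤ C) :
    Summable fun t : S => (G.q s a t).toReal * f t := by
  apply Summable.of_norm_bounded (g := fun t => (G.q s a t).toReal * C)
  · exact (G.summable_q s a).mul_right C
  · intro t
    rw [Real.norm_eq_abs, abs_mul, abs_of_nonneg ENNReal.toReal_nonneg]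
    exact mul_le_mul_of_nonneg_left (hf t) ENNReal.toReal_nonneg

lemma qsum_mono (s : S) (a : A) {f g : S → ℝ} {Cf Cg : ℝ}
    (hf : ∀ t, |f t| ≤ Cf) (hg : ∀ t, |g t| ≤ Cg) (h : ∀ t, (G.q s a t).toReal ≠ 0 → f t ≤ g t) :
    G.qsum s a f ≤ G.qsum s a g := by
  apply Summable.tsum_le_tsum _ (G.summable_qmul s a hf) (G.summable_qmul s a hg)
  intro t
  rcases eq_or_ne ((G.q s a t).toReal) 0 with h0 | h0
  · rw [h0, zero_mul, zero_mul]
  · exact mul_le_mul_of_nonneg_left (h t h0) ENNReal.toReal_nonneg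

lemma qsum_const (s : S) (a : A) (c : ℝ) : G.qsum s a (fun _ => c) = c := by
  unfold qsum
  rw [tsum_mul_right, G.q_toReal_tsum, one_mul]

lemma qsum_sub_const (s : S) (a : A) {f : S → ℝ} {Cf : ℝ} (hf : ∀ t, |f t| ≤ Cf) (c : ℝ) :
    G.qsum s a (fun t => f t - c) = G.qsum s a f - c := by
  unfold qsum
  have : ∀ t : S, (G.q s a t).toReal * (f t - c) =
      (G.q s a t).toReal * f t - (G.q s a t).toReal * c := fun t => by ring
  rw [tsum_congr this, Summable.tsum_sub (G.summable_qmul s a hf) ((G.summable_q s a).mul_right c),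
    tsum_mul_right, G.q_toReal_tsum, one_mul]

lemma qsum_add_const (s : S) (a : A) {f : S → ℝ} {Cf : ℝ} (hf : ∀ t, |f t| ≤ Cf) (c : ℝ) :
    G.qsum s a (fun t => f t + c) = G.qsum s a f + c := by
  have := G.qsum_sub_const s a hf (-c)
  simpa [sub_neg_eq_add] using this

lemma abs_qsum_le (s : S) (a : A) {f : S → ℝ} {Cf : ℝ} (hf : ∀ t, |f t| ≤ Cf) :
    |G.qsum s a f| ≤ Cf := by
  have hCf : 0 ≤ Cf := le_trans (abs_nonneg _) (hf s)
  rw [abs_le]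
  constructor
  · have := G.qsum_mono s a (f := fun _ => -Cf) (g := f)
      (Cf := Cf) (Cg := Cf) (fun t => by rw [abs_neg, abs_of_nonneg hCf]) hf
      (fun t _ => (abs_le.1 (hf t)).1)
    rwa [G.qsum_const] at this
  · have := G.qsum_mono s a (f := f) (g := fun _ => Cf) hf
      (fun t => by rw [abs_of_nonneg hCf]) (fun t _ => (abs_le.1 (hf t)).2)
    rwa [G.qsum_const] at this

/-- An action maximizing the one-step expected value of `f`. -/
noncomputable def bestAct (f : S → ℝ) (z : S) : A :=
  (Finset.exists_max_image (G.act z) (G.qsum z · f) (G.act_nonempty z)).choose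

lemma bestAct_mem (f : S → ℝ) (z : S) : G.bestAct f z ∈ G.act z :=
  (Finset.exists_max_image (G.act z) (G.qsum z · f) (G.act_nonempty z)).choose_spec.1

lemma bestAct_ge (f : S → ℝ) (z : S) {a : A} (ha : a ∈ G.act z) :
    G.qsum z a f ≤ G.qsum z (G.bestAct f z) f :=
  (Finset.exists_max_image (G.act z) (G.qsum z · f) (G.act_nonempty z)).choose_spec.2 a ha

/-- An action minimizing the one-step expected value of `f`. -/
noncomputable def worstAct (f : S → ℝ) (z : S) : A :=
  (Finset.exists_min_image (G.act z) (G.qsum z · f) (G.act_nonempty z)).choose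

lemma worstAct_mem (f : S → ℝ) (z : S) : G.worstAct f z ∈ G.act z :=
  (Finset.exists_min_image (G.act z) (G.qsum z · f) (G.act_nonempty z)).choose_spec.1

lemma worstAct_le (f : S → ℝ) (z : S) {a : A} (ha : a ∈ G.act z) :
    G.qsum z (G.worstAct f z) f ≤ G.qsum z a f :=
  (Finset.exists_min_image (G.act z) (G.qsum z · f) (G.act_nonempty z)).choose_spec.2 a ha

/-- The lower value of the zero-sum game of player `i` against the rest. -/
noncomputable def lval (E : G.Profile → S → N → ℝ) (i : N) (s : S) : ℝ :=
  ⨆ τi : G.Strat i, ⨅ τo : G.Profile, E (G.comb i τi τo) s i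

lemma le_of_eps {a b : ℝ} (h : ∀ ε : ℝ, 0 < ε → a ≤ b + ε) : a ≤ b := by
  by_contra hlt
  push_neg at hlt
  have := h ((a - b) / 2) (by linarith)
  linarith

lemma playFun_comb (i : N) (τi : G.Strat i) (τo : G.Profile) (z : S) :
    G.playFun (G.comb i τi τo) z = if G.ctrl z = i then τi.1 z else G.playFun τo z := by
  unfold playFun comb
  by_cases h : G.ctrl z = i
  · rw [if_pos h, h]
    simp [Function.update]
  · rw [if_neg h]
    simp [Function.update, h]

/-! ### Gluing strategies over subtrees -/

noncomputable def glueStrat (i : N) (s : S) (fam : S → G.Strat i) (base : G.Strat i) :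
    G.Strat i :=
  ⟨fun z => if Relation.ReflTransGen G.step s z ∧ z ≠ s
      then (fam (G.par^[G.depth z - G.depth s - 1] z)).1 z else base.1 z, by
    intro z hz
    dsimp only
    split_ifs
    · exact (fam _).2 z hz
    · exact base.2 z hz⟩

noncomputable def glueProf (s : S) (fam : S → G.Profile) (base : G.Profile) : G.Profile :=
  fun j =>
  ⟨fun z => if Relation.ReflTransGen G.step s z ∧ z ≠ s
      then ((fam (G.par^[G.depth z - G.depth s - 1] z)) j).1 z else (base j).1 z, by
    intro z hz
    dsimp only
    split_ifs
    · exact ((fam _) j).2 z hz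
    · exact (base j).2 z hz⟩

lemma anc_child {s t z : S} {a : A} (ha : a ∈ G.act s) (ht : t ∈ (G.q s a).support)
    (hz : Relation.ReflTransGen G.step t z) :
    (Relation.ReflTransGen G.step s z ∧ z ≠ s) ∧ G.par^[G.depth z - G.depth s - 1] z = t := by
  have hst : Relation.ReflTransGen G.step s t := Relation.ReflTransGen.single ⟨a, ha, ht⟩
  have hdt : G.depth t = G.depth s + 1 := G.depth_child ha ht
  have hdz : G.depth t ≤ G.depth z := G.depth_le_of_rtg hz
  refine ⟨⟨hst.trans hz, ?_⟩, ?_⟩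
  · intro h
    rw [h] at hdz
    omega
  · have := G.anc_eq_of_rtg hz
    rw [show G.depth z - G.depth s - 1 = G.depth z - G.depth t from by omega]
    exact this

lemma glueStrat_agree (i : N) (s : S) (fam : S → G.Strat i) (base : G.Strat i)
    {t z : S} {a : A} (ha : a ∈ G.act s) (ht : t ∈ (G.q s a).support)
    (hz : Relation.ReflTransGen G.step t z) :
    (G.glueStrat i s fam base).1 z = (fam t).1 z := by
  obtain ⟨hcond, hanc⟩ := G.anc_child ha ht hz
  show (if _ then _ else _) = _
  rw [if_pos hcond, hanc]

lemma glueStrat_at (i : N) (s : S) (fam : S → G.Strat i) (base : G.Strat i) :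
    (G.glueStrat i s fam base).1 s = base.1 s := by
  show (if _ then _ else _) = _
  rw [if_neg (by simp)]

lemma glueProf_agree (s : S) (fam : S → G.Profile) (base : G.Profile)
    {t z : S} {a : A} (ha : a ∈ G.act s) (ht : t ∈ (G.q s a).support)
    (hz : Relation.ReflTransGen G.step t z) :
    G.playFun (G.glueProf s fam base) z = G.playFun (fam t) z := by
  obtain ⟨hcond, hanc⟩ := G.anc_child ha ht hz
  show (if _ then _ else _) = _
  rw [if_pos hcond, hanc]
  rfl

lemma glueProf_at (s : S) (fam : S → G.Profile) (base : G.Profile) :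
    G.playFun (G.glueProf s fam base) s = G.playFun base s := by
  show (if _ then _ else _) = _
  rw [if_neg (by simp)]
  rfl

noncomputable def stratPlay (i : N) {s : S} {a : A} (ha : a ∈ G.act s) : G.Strat i :=
  ⟨fun z => if z = s then a else G.fwdA z, by
    intro z _
    dsimp only
    split_ifs with h
    · subst h; exact ha
    · exact G.fwdA_mem z⟩

noncomputable def profPlay {s : S} {a : A} (ha : a ∈ G.act s) : G.Profile := fun _ =>
  ⟨fun z => if z = s then a else G.fwdA z, by
    intro z _
    dsimp only
    split_ifs with h
    · subst h; exact ha
    · exact G.fwdA_mem z⟩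

lemma profPlay_at {s : S} {a : A} (ha : a ∈ G.act s) : G.playFun (G.profPlay ha) s = a := by
  show (if _ then _ else _) = _
  rw [if_pos rfl]

/-! ### Bellman relations for the lower value -/

section Value

variable [Countable S] {μ : G.Profile → Measure G.Play} {u : N → G.Play → ℝ}
  {E : G.Profile → S → N → ℝ} {i : N} {C : ℝ}
  (hμ : G.IsInducedMeasure μ) (hE : G.IsSubgamePayoff μ u E)
  (hui : Measurable (u i)) (hC : ∀ p, |u i p| ≤ C)

include hμ hE hui hC

lemma bddBelow_inner (τi : G.Strat i) (s : S) :
    BddBelow (Set.range fun τo : G.Profile => E (G.comb i τi τo) s i) := by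
  refine ⟨-C, ?_⟩
  rintro x ⟨τo, rfl⟩
  exact (abs_le.1 (G.abs_E_le hμ hE hui hC _ s)).1

lemma bddAbove_outer (s : S) :
    BddAbove (Set.range fun τi : G.Strat i => ⨅ τo : G.Profile, E (G.comb i τi τo) s i) := by
  refine ⟨C, ?_⟩
  rintro x ⟨τi, rfl⟩
  exact ciInf_le_of_le (G.bddBelow_inner hμ hE hui hC τi s) G.dfltProfile
    (abs_le.1 (G.abs_E_le hμ hE hui hC _ s)).2

lemma lowmin_le_lval (τi : G.Strat i) (s : S) :
    (⨅ τo : G.Profile, E (G.comb i τi τo) s i) ≤ G.lval E i s :=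
  le_ciSup (G.bddAbove_outer hμ hE hui hC s) τi

lemma abs_lval_le (s : S) : |G.lval E i s| ≤ C := by
  rw [abs_le]
  constructor
  · have h1 : -C ≤ ⨅ τo : G.Profile, E (G.comb i (G.dflt i) τo) s i :=
      le_ciInf fun τo => (abs_le.1 (G.abs_E_le hμ hE hui hC _ s)).1
    exact h1.trans (G.lowmin_le_lval hμ hE hui hC _ s)
  · exact ciSup_le fun τi => ciInf_le_of_le (G.bddBelow_inner hμ hE hui hC τi s) G.dfltProfile
      (abs_le.1 (G.abs_E_le hμ hE hui hC _ s)).2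

lemma E_step_qsum (σ : G.Profile) (s : S) :
    E σ s i = G.qsum s (G.playFun σ s) (fun t => E σ t i) :=
  G.E_step hμ hE hui hC σ s

lemma abs_lval_sub_le (c : ℝ) (t : S) : |G.lval E i t - c| ≤ C + |c| :=
  (abs_sub _ _).trans (by
    have := G.abs_lval_le hμ hE hui hC (u := u) t
    linarith)

lemma abs_lval_add_le (c : ℝ) (t : S) : |G.lval E i t + c| ≤ C + |c| :=
  (abs_add_le _ _).trans (by
    have := G.abs_lval_le hμ hE hui hC (u := u) t
    linarith)

lemma lval_eps_sel (ε : ℝ) (hε : 0 < ε) :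
    ∀ t : S, ∃ τit : G.Strat i,
      G.lval E i t - ε < ⨅ τo : G.Profile, E (G.comb i τit τo) t i := by
  intro t
  have h0 : G.lval E i t - ε < G.lval E i t := by linarith
  rw [lval] at h0
  exact exists_lt_of_lt_ciSup h0

lemma mem_supp_of_toReal_ne {s t : S} {a : A} (hq : (G.q s a t).toReal ≠ 0) :
    t ∈ (G.q s a).support := by
  rw [(G.q s a).mem_support_iff]
  intro h0
  exact hq (by rw [h0, ENNReal.toReal_zero])

/-- (A≥): at a state controlled by `i`, any action's one-step value is at most the value. -/
lemma qsum_le_lval (s : S) (hs : G.ctrl s = i) {a : A} (ha : a ∈ G.act s) :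
    G.qsum s a (G.lval E i) ≤ G.lval E i s := by
  apply le_of_eps
  intro ε hε
  obtain ⟨fam, hfam⟩ := Classical.axiomOfChoice (G.lval_eps_sel hμ hE hui hC ε hε)
  set τi := G.glueStrat i s fam (G.stratPlay i ha) with hτi
  have hplay : ∀ τo : G.Profile, G.playFun (G.comb i τi τo) s = a := by
    intro τo
    rw [G.playFun_comb, if_pos hs, hτi, G.glueStrat_at]
    show (if _ then _ else _) = _
    rw [if_pos rfl]
  have hkey : ∀ τo : G.Profile, G.qsum s a (G.lval E i) - ε ≤ E (G.comb i τi τo) s i := by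
    intro τo
    have hstep := G.E_step_qsum hμ hE hui hC (G.comb i τi τo) s
    rw [hplay τo] at hstep
    rw [hstep]
    have hmono : G.qsum s a (fun t => G.lval E i t - ε) ≤
        G.qsum s a (fun t => E (G.comb i τi τo) t i) := by
      apply G.qsum_mono s a (Cf := C + |ε|) (Cg := C)
        (fun t => G.abs_lval_sub_le hμ hE hui hC ε t)
        (fun t => G.abs_E_le hμ hE hui hC _ t)
      intro t hq
      have hts : t ∈ (G.q s a).support := G.mem_supp_of_toReal_ne hμ hE hui hC hq
      have hcongr : E (G.comb i τi τo) t i = E (G.comb i (fam t) τo) t i := by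
        apply G.E_congr hμ hE i
        intro z hz
        rw [G.playFun_comb, G.playFun_comb]
        by_cases hcz : G.ctrl z = i
        · rw [if_pos hcz, if_pos hcz, hτi, G.glueStrat_agree i s fam _ ha hts hz]
        · rw [if_neg hcz, if_neg hcz]
      rw [hcongr]
      have h1 : (⨅ τo' : G.Profile, E (G.comb i (fam t) τo') t i) ≤
          E (G.comb i (fam t) τo) t i :=
        ciInf_le (G.bddBelow_inner hμ hE hui hC (fam t) t) τo
      have h2 := hfam t
      linarith
    rw [G.qsum_sub_const s a (Cf := C) (fun t => G.abs_lval_le hμ hE hui hC t) ε] at hmono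
    exact hmono
  have h4 : G.qsum s a (G.lval E i) - ε ≤ ⨅ τo : G.Profile, E (G.comb i τi τo) s i :=
    le_ciInf hkey
  have h3 := G.lowmin_le_lval hμ hE hui hC τi s
  linarith

/-- (A≤): at a state controlled by `i`, the value is at most the best one-step value. -/
lemma lval_le_qsum_best (s : S) (hs : G.ctrl s = i) :
    G.lval E i s ≤ G.qsum s (G.bestAct (G.lval E i) s) (G.lval E i) := by
  apply le_of_eps
  intro ε hε
  rw [lval]
  apply ciSup_le
  intro τi
  have ha₀ : τi.1 s ∈ G.act s := τi.2 s hs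
  have hsel : ∀ t : S, ∃ τot : G.Profile,
      E (G.comb i τi τot) t i < (⨅ τo : G.Profile, E (G.comb i τi τo) t i) + ε :=
    fun t => exists_lt_of_ciInf_lt (lt_add_of_pos_right _ hε)
  obtain ⟨famo, hfamo⟩ := Classical.axiomOfChoice hsel
  set τo := G.glueProf s famo (G.profPlay ha₀) with hτo
  refine le_trans (ciInf_le (G.bddBelow_inner hμ hE hui hC τi s) τo) ?_
  have hstep := G.E_step_qsum hμ hE hui hC (G.comb i τi τo) s
  have hplay : G.playFun (G.comb i τi τo) s = τi.1 s := by
    rw [G.playFun_comb, if_pos hs]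
  rw [hplay] at hstep
  rw [hstep]
  have hmono : G.qsum s (τi.1 s) (fun t => E (G.comb i τi τo) t i) ≤
      G.qsum s (τi.1 s) (fun t => G.lval E i t + ε) := by
    apply G.qsum_mono s _ (Cf := C) (Cg := C + |ε|)
      (fun t => G.abs_E_le hμ hE hui hC _ t)
      (fun t => G.abs_lval_add_le hμ hE hui hC ε t)
    intro t hq
    have hts : t ∈ (G.q s (τi.1 s)).support := G.mem_supp_of_toReal_ne hμ hE hui hC hq
    have hcongr : E (G.comb i τi τo) t i = E (G.comb i τi (famo t)) t i := by
      apply G.E_congr hμ hE i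
      intro z hz
      rw [G.playFun_comb, G.playFun_comb]
      by_cases hcz : G.ctrl z = i
      · rw [if_pos hcz, if_pos hcz]
      · rw [if_neg hcz, if_neg hcz, hτo, G.glueProf_agree s famo _ ha₀ hts hz]
    rw [hcongr]
    have h2 := hfamo t
    have h3 : (⨅ τo' : G.Profile, E (G.comb i τi τo') t i) ≤ G.lval E i t :=
      G.lowmin_le_lval hμ hE hui hC τi t
    linarith
  rw [G.qsum_add_const s _ (Cf := C) (fun t => G.abs_lval_le hμ hE hui hC t) ε] at hmono
  refine hmono.trans ?_
  have := G.bestAct_ge (G.lval E i) s ha₀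
  linarith

/-- (B≤): at a state not controlled by `i`, the value is at most any action's one-step value. -/
lemma lval_le_qsum_not_ctrl (s : S) (hs : G.ctrl s ≠ i) {a : A} (ha : a ∈ G.act s) :
    G.lval E i s ≤ G.qsum s a (G.lval E i) := by
  apply le_of_eps
  intro ε hε
  rw [lval]
  apply ciSup_le
  intro τi
  have hsel : ∀ t : S, ∃ τot : G.Profile,
      E (G.comb i τi τot) t i < (⨅ τo : G.Profile, E (G.comb i τi τo) t i) + ε :=
    fun t => exists_lt_of_ciInf_lt (lt_add_of_pos_right _ hε)
  obtain ⟨famo, hfamo⟩ := Classical.axiomOfChoice hsel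
  set τo := G.glueProf s famo (G.profPlay ha) with hτo
  refine le_trans (ciInf_le (G.bddBelow_inner hμ hE hui hC τi s) τo) ?_
  have hstep := G.E_step_qsum hμ hE hui hC (G.comb i τi τo) s
  have hplay : G.playFun (G.comb i τi τo) s = a := by
    rw [G.playFun_comb, if_neg hs, hτo, G.glueProf_at, G.profPlay_at]
  rw [hplay] at hstep
  rw [hstep]
  have hmono : G.qsum s a (fun t => E (G.comb i τi τo) t i) ≤
      G.qsum s a (fun t => G.lval E i t + ε) := by
    apply G.qsum_mono s _ (Cf := C) (Cg := C + |ε|)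
      (fun t => G.abs_E_le hμ hE hui hC _ t)
      (fun t => G.abs_lval_add_le hμ hE hui hC ε t)
    intro t hq
    have hts : t ∈ (G.q s a).support := G.mem_supp_of_toReal_ne hμ hE hui hC hq
    have hcongr : E (G.comb i τi τo) t i = E (G.comb i τi (famo t)) t i := by
      apply G.E_congr hμ hE i
      intro z hz
      rw [G.playFun_comb, G.playFun_comb]
      by_cases hcz : G.ctrl z = i
      · rw [if_pos hcz, if_pos hcz]
      · rw [if_neg hcz, if_neg hcz, hτo, G.glueProf_agree s famo _ ha hts hz]
    rw [hcongr]
    have h2 := hfamo t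
    have h3 : (⨅ τo' : G.Profile, E (G.comb i τi τo') t i) ≤ G.lval E i t :=
      G.lowmin_le_lval hμ hE hui hC τi t
    linarith
  rw [G.qsum_add_const s _ (Cf := C) (fun t => G.abs_lval_le hμ hE hui hC t) ε] at hmono
  linarith

/-- (B≥): at a state not controlled by `i`, the worst one-step value is at most the value. -/
lemma qsum_worst_le_lval (s : S) (hs : G.ctrl s ≠ i) :
    G.qsum s (G.worstAct (G.lval E i) s) (G.lval E i) ≤ G.lval E i s := by
  apply le_of_eps
  intro ε hε
  obtain ⟨fam, hfam⟩ := Classical.axiomOfChoice (G.lval_eps_sel hμ hE hui hC ε hε)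
  set τi := G.glueStrat i s fam (G.dflt i) with hτi
  have hkey : ∀ τo : G.Profile,
      G.qsum s (G.worstAct (G.lval E i) s) (G.lval E i) - ε ≤ E (G.comb i τi τo) s i := by
    intro τo
    set a' := G.playFun (G.comb i τi τo) s with ha'def
    have ha' : a' ∈ G.act s := G.playFun_mem_act _ s
    have hstep := G.E_step_qsum hμ hE hui hC (G.comb i τi τo) s
    rw [← ha'def] at hstep
    rw [hstep]
    have hmono : G.qsum s a' (fun t => G.lval E i t - ε) ≤
        G.qsum s a' (fun t => E (G.comb i τi τo) t i) := by
      apply G.qsum_mono s a' (Cf := C + |ε|) (Cg := C)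
        (fun t => G.abs_lval_sub_le hμ hE hui hC ε t)
        (fun t => G.abs_E_le hμ hE hui hC _ t)
      intro t hq
      have hts : t ∈ (G.q s a').support := G.mem_supp_of_toReal_ne hμ hE hui hC hq
      have hcongr : E (G.comb i τi τo) t i = E (G.comb i (fam t) τo) t i := by
        apply G.E_congr hμ hE i
        intro z hz
        rw [G.playFun_comb, G.playFun_comb]
        by_cases hcz : G.ctrl z = i
        · rw [if_pos hcz, if_pos hcz, hτi, G.glueStrat_agree i s fam _ ha' hts hz]
        · rw [if_neg hcz, if_neg hcz]
      rw [hcongr]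
      have h1 : (⨅ τo' : G.Profile, E (G.comb i (fam t) τo') t i) ≤
          E (G.comb i (fam t) τo) t i :=
        ciInf_le (G.bddBelow_inner hμ hE hui hC (fam t) t) τo
      have h2 := hfam t
      linarith
    rw [G.qsum_sub_const s a' (Cf := C) (fun t => G.abs_lval_le hμ hE hui hC t) ε] at hmono
    have hworst := G.worstAct_le (G.lval E i) s ha'
    linarith
  have h4 := le_ciInf hkey
  have h3 := G.lowmin_le_lval hμ hE hui hC τi s
  linarith

end Value

/-! ### Martingale property of the value along plays -/

section Mart

variable [Countable S] {μ : G.Profile → Measure G.Play} {u : N → G.Play → ℝ}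
  {E : G.Profile → S → N → ℝ} {i : N} {C : ℝ}

lemma summable_integral_slice (hμ : G.IsInducedMeasure μ) (σ : G.Profile)
    {g : G.Play → ℝ} (hg : MeasureTheory.Integrable g (μ σ)) (s : S) {ℓ : ℕ}
    (hℓ : G.depth s ≤ ℓ) :
    Summable fun t : S => ∫ p in G.slice s ℓ t, g p ∂(μ σ) := by
  have := MeasureTheory.hasSum_integral_iUnion (μ := μ σ) (f := g)
    (G.slice_measurable s ℓ) (G.slice_disjoint s ℓ)
    (by rw [G.slice_iUnion s hℓ]; exact hg.integrableOn)
  exact this.summable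

lemma setIntegral_through_proj (hμ : G.IsInducedMeasure μ) (σ : G.Profile) {t : S} {ℓ : ℕ}
    (hℓ : G.depth t = ℓ) (f : S → ℝ) :
    ∫ p in G.through t, f ((p.1 ℓ).1) ∂(μ σ) = f t * (μ σ (G.through t)).toReal := by
  have heq : Set.EqOn (fun p : G.Play => f ((p.1 ℓ).1)) (fun _ => f t) (G.through t) := by
    intro p hp
    rw [G.through_eq] at hp
    subst hℓ
    simp only
    rw [hp]
  rw [MeasureTheory.setIntegral_congr_fun (G.measurableSet_through t) heq,
    MeasureTheory.setIntegral_const, smul_eq_mul, mul_comm, MeasureTheory.measureReal_def]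

lemma integral_through_step (hμ : G.IsInducedMeasure μ) (σ : G.Profile) (t : S)
    (f : S → ℝ) {Cf : ℝ} (hCf : ∀ z, |f z| ≤ Cf) :
    ∫ p in G.through t, f ((p.1 (G.depth t + 1)).1) ∂(μ σ) =
      (μ σ (G.through t)).toReal * G.qsum t (G.playFun σ t) f := by
  haveI := hμ.1 σ
  have hint : MeasureTheory.Integrable (fun p : G.Play => f ((p.1 (G.depth t + 1)).1)) (μ σ) :=
    G.integrable_bdd hμ σ (G.measurable_stateFn f _) (fun p => hCf _)
  rw [G.integral_slice_sum hμ σ hint t (ℓ := G.depth t + 1) (by omega)]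
  set a₀ := G.playFun σ t with ha₀
  have hterm : ∀ t' : S,
      (∫ p in G.slice t (G.depth t + 1) t', f ((p.1 (G.depth t + 1)).1) ∂(μ σ)) =
      (μ σ (G.through t)).toReal * ((G.q t a₀ t').toReal * f t') := by
    intro t'
    unfold slice
    split_ifs with hcond
    · obtain ⟨hact, hsupp⟩ := G.child_cond hcond.1 hcond.2
      rw [G.setIntegral_through_proj hμ σ hcond.1 f]
      have := G.meas_through_child hμ σ hact hsupp
      rw [this]
      by_cases hpa : G.pact t' = a₀
      · rw [hpa, if_pos rfl, mul_one, ENNReal.toReal_mul]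
        ring
      · have hq0 : G.q t a₀ t' = 0 := by
          by_contra hq
          have hts : t' ∈ (G.q t a₀).support := hq
          exact hpa (G.par_eq (G.playFun_mem_act σ t) hts).2
        rw [if_neg hpa, hq0]
        simp
    · have hq0 : G.q t a₀ t' = 0 := by
        by_contra hq
        have hts : t' ∈ (G.q t a₀).support := hq
        exact hcond (G.cond_of_child (G.playFun_mem_act σ t) hts)
      rw [MeasureTheory.setIntegral_empty, hq0]
      simp
  rw [tsum_congr hterm, tsum_mul_left]
  rfl

variable (hμ : G.IsInducedMeasure μ) (hE : G.IsSubgamePayoff μ u E)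
  (hui : Measurable (u i)) (hC : ∀ p, |u i p| ≤ C)

include hμ hE hui hC

lemma lval_mem_interval (t : S) :
    sInf (u i '' G.through t) ≤ G.lval E i t ∧ G.lval E i t ≤ sSup (u i '' G.through t) := by
  constructor
  · have h1 : sInf (u i '' G.through t) ≤ ⨅ τo : G.Profile, E (G.comb i (G.dflt i) τo) t i :=
      le_ciInf fun τo => (G.E_mem_interval hμ hE hui hC _ t).1
    exact h1.trans (G.lowmin_le_lval hμ hE hui hC _ t)
  · exact ciSup_le fun τi => ciInf_le_of_le (G.bddBelow_inner hμ hE hui hC τi t) G.dfltProfile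
      (G.E_mem_interval hμ hE hui hC _ t).2

lemma abs_u_sub_lval_le {t : S} {p : G.Play} (hp : p ∈ G.through t) :
    |u i p - G.lval E i t| ≤ G.osc (u i) t := by
  have h1 := G.mem_interval_of_through hC hp
  have h2 := G.lval_mem_interval hμ hE hui hC t
  rw [abs_le, osc]
  constructor <;> [linarith [h1.1, h2.2]; linarith [h1.2, h2.1]]

/-- One-step monotonicity of the expected value process, given the one-step
Bellman inequality along the subtree. -/
lemma phi_step_le (τ : G.Profile) (s : S)
    (hb : ∀ t, Relation.ReflTransGen G.step s t →
      G.lval E i t ≤ G.qsum t (G.playFun τ t) (G.lval E i))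
    {ℓ : ℕ} (hℓ : G.depth s ≤ ℓ) :
    (∫ p in G.through s, G.lval E i ((p.1 ℓ).1) ∂(μ τ)) ≤
      ∫ p in G.through s, G.lval E i ((p.1 (ℓ + 1)).1) ∂(μ τ) := by
  haveI := hμ.1 τ
  have habs : ∀ t, |G.lval E i t| ≤ C := fun t => G.abs_lval_le hμ hE hui hC t
  have hint1 : MeasureTheory.Integrable (fun p : G.Play => G.lval E i ((p.1 ℓ).1)) (μ τ) :=
    G.integrable_bdd hμ τ (G.measurable_stateFn _ _) (fun p => habs _)
  have hint2 : MeasureTheory.Integrable (fun p : G.Play => G.lval E i ((p.1 (ℓ + 1)).1)) (μ τ) :=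
    G.integrable_bdd hμ τ (G.measurable_stateFn _ _) (fun p => habs _)
  rw [G.integral_slice_sum hμ τ hint1 s hℓ, G.integral_slice_sum hμ τ hint2 s hℓ]
  refine Summable.tsum_le_tsum (fun t => ?_) (G.summable_integral_slice hμ τ hint1 s hℓ)
    (G.summable_integral_slice hμ τ hint2 s hℓ)
  unfold slice
  split_ifs with hcond
  · rw [G.setIntegral_through_proj hμ τ hcond.1 (G.lval E i)]
    have hstep : ∫ p in G.through t, G.lval E i ((p.1 (ℓ + 1)).1) ∂(μ τ) =
        (μ τ (G.through t)).toReal * G.qsum t (G.playFun τ t) (G.lval E i) := by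
      have := G.integral_through_step hμ τ t (G.lval E i) habs
      rwa [hcond.1] at this
    rw [hstep]
    rw [mul_comm (G.lval E i t) _]
    exact mul_le_mul_of_nonneg_left (hb t hcond.2) ENNReal.toReal_nonneg
  · rw [MeasureTheory.setIntegral_empty, MeasureTheory.setIntegral_empty]

lemma phi_step_ge (τ : G.Profile) (s : S)
    (hb : ∀ t, Relation.ReflTransGen G.step s t →
      G.qsum t (G.playFun τ t) (G.lval E i) ≤ G.lval E i t)
    {ℓ : ℕ} (hℓ : G.depth s ≤ ℓ) :
    (∫ p in G.through s, G.lval E i ((p.1 (ℓ + 1)).1) ∂(μ τ)) ≤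
      ∫ p in G.through s, G.lval E i ((p.1 ℓ).1) ∂(μ τ) := by
  haveI := hμ.1 τ
  have habs : ∀ t, |G.lval E i t| ≤ C := fun t => G.abs_lval_le hμ hE hui hC t
  have hint1 : MeasureTheory.Integrable (fun p : G.Play => G.lval E i ((p.1 ℓ).1)) (μ τ) :=
    G.integrable_bdd hμ τ (G.measurable_stateFn _ _) (fun p => habs _)
  have hint2 : MeasureTheory.Integrable (fun p : G.Play => G.lval E i ((p.1 (ℓ + 1)).1)) (μ τ) :=
    G.integrable_bdd hμ τ (G.measurable_stateFn _ _) (fun p => habs _)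
  rw [G.integral_slice_sum hμ τ hint1 s hℓ, G.integral_slice_sum hμ τ hint2 s hℓ]
  refine Summable.tsum_le_tsum (fun t => ?_) (G.summable_integral_slice hμ τ hint2 s hℓ)
    (G.summable_integral_slice hμ τ hint1 s hℓ)
  unfold slice
  split_ifs with hcond
  · rw [G.setIntegral_through_proj hμ τ hcond.1 (G.lval E i)]
    have hstep : ∫ p in G.through t, G.lval E i ((p.1 (ℓ + 1)).1) ∂(μ τ) =
        (μ τ (G.through t)).toReal * G.qsum t (G.playFun τ t) (G.lval E i) := by
      have := G.integral_through_step hμ τ t (G.lval E i) habs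
      rwa [hcond.1] at this
    rw [hstep]
    rw [mul_comm (G.lval E i t) _]
    exact mul_le_mul_of_nonneg_left (hb t hcond.2) ENNReal.toReal_nonneg
  · rw [MeasureTheory.setIntegral_empty, MeasureTheory.setIntegral_empty]

lemma phi_lb (τ : G.Profile) (s : S)
    (hb : ∀ t, Relation.ReflTransGen G.step s t →
      G.lval E i t ≤ G.qsum t (G.playFun τ t) (G.lval E i)) :
    ∀ n : ℕ, G.lval E i s * (μ τ (G.through s)).toReal ≤
      ∫ p in G.through s, G.lval E i ((p.1 (G.depth s + n)).1) ∂(μ τ) := by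
  intro n
  induction n with
  | zero =>
    rw [Nat.add_zero, G.setIntegral_through_proj hμ τ rfl (G.lval E i)]
  | succ n ih =>
    exact ih.trans (G.phi_step_le hμ hE hui hC τ s hb (Nat.le_add_right _ _))

lemma phi_ub (τ : G.Profile) (s : S)
    (hb : ∀ t, Relation.ReflTransGen G.step s t →
      G.qsum t (G.playFun τ t) (G.lval E i) ≤ G.lval E i t) :
    ∀ n : ℕ, (∫ p in G.through s, G.lval E i ((p.1 (G.depth s + n)).1) ∂(μ τ)) ≤
      G.lval E i s * (μ τ (G.through s)).toReal := by
  intro n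
  induction n with
  | zero =>
    rw [Nat.add_zero, G.setIntegral_through_proj hμ τ rfl (G.lval E i)]
  | succ n ih =>
    exact (G.phi_step_ge hμ hE hui hC τ s hb (Nat.le_add_right _ _)).trans ih

/-- The integral of the payoff differs from the value process by at most the
expected oscillation. -/
lemma integral_osc_bound (τ : G.Profile) (s : S) {ℓ : ℕ} (hℓ : G.depth s ≤ ℓ) :
    |(∫ p in G.through s, u i p ∂(μ τ)) -
        ∫ p in G.through s, G.lval E i ((p.1 ℓ).1) ∂(μ τ)| ≤
      ∫ p in G.through s, G.osc (u i) ((p.1 ℓ).1) ∂(μ τ) := by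
  haveI := hμ.1 τ
  have habs : ∀ t, |G.lval E i t| ≤ C := fun t => G.abs_lval_le hμ hE hui hC t
  have hoscabs : ∀ t, |G.osc (u i) t| ≤ 2 * C := fun t => by
    rw [abs_of_nonneg (G.osc_nonneg hC t)]
    exact G.osc_le hC t
  have hint1 : MeasureTheory.Integrable (u i) (μ τ) := G.integrable_bdd hμ τ hui hC
  have hint2 : MeasureTheory.Integrable (fun p : G.Play => G.lval E i ((p.1 ℓ).1)) (μ τ) :=
    G.integrable_bdd hμ τ (G.measurable_stateFn _ _) (fun p => habs _)
  have hint3 : MeasureTheory.Integrable (fun p : G.Play => G.osc (u i) ((p.1 ℓ).1)) (μ τ) :=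
    G.integrable_bdd hμ τ (G.measurable_stateFn _ _) (fun p => hoscabs _)
  rw [← MeasureTheory.integral_sub hint1.integrableOn hint2.integrableOn]
  have h1 : |∫ p in G.through s, (u i p - G.lval E i ((p.1 ℓ).1)) ∂(μ τ)| ≤
      ∫ p in G.through s, |u i p - G.lval E i ((p.1 ℓ).1)| ∂(μ τ) := by
    simpa [Real.norm_eq_abs] using MeasureTheory.norm_integral_le_integral_norm
      (μ := (μ τ).restrict (G.through s)) (f := fun p => u i p - G.lval E i ((p.1 ℓ).1))
  refine h1.trans ?_
  apply MeasureTheory.setIntegral_mono_on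
    ((hint1.sub hint2).abs.integrableOn) hint3.integrableOn (G.measurableSet_through s)
  intro p hp
  have hpt : p ∈ G.through ((p.1 ℓ).1) := ⟨ℓ, rfl⟩
  exact G.abs_u_sub_lval_le hμ hE hui hC hpt

end Mart

/-! ### Convergence of the oscillation along plays -/

lemma osc_coord_tendsto {uI : G.Play → ℝ} {C : ℝ} (hcont : Continuous uI)
    (hC : ∀ p, |uI p| ≤ C) (p : G.Play) :
    Filter.Tendsto (fun ℓ : ℕ => G.osc uI ((p.1 ℓ).1)) Filter.atTop (nhds 0) := by
  rw [Metric.tendsto_atTop]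
  intro ε hε
  have hball : uI ⁻¹' Metric.ball (uI p) (ε / 3) ∈ nhds p :=
    hcont.continuousAt.preimage_mem_nhds (Metric.ball_mem_nhds _ (by linarith))
  rw [mem_nhds_iff] at hball
  obtain ⟨V, hVsub, hVopen, hpV⟩ := hball
  letI : TopologicalSpace S := ⊥
  letI : TopologicalSpace A := ⊥
  obtain ⟨W, hWopen, hWV⟩ := isOpen_induced_iff.1 hVopen
  have hpW : p.1 ∈ W := by
    have hpV' : p ∈ V := hpV
    rw [← hWV] at hpV'
    exact hpV'
  obtain ⟨I, usets, hIu, hIsub⟩ := isOpen_pi_iff.1 hWopen p.1 hpW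
  refine ⟨I.sup id + 1, fun ℓ hℓ => ?_⟩
  have key : ∀ p' : G.Play, p' ∈ G.through ((p.1 ℓ).1) → |uI p' - uI p| < ε / 3 := by
    intro p' hp'
    rw [G.through_eq, G.play_depth] at hp'
    have hcoord : ∀ m, m < ℓ → p'.1 m = p.1 m := G.play_hist_unique p' p hp'
    have hmem : p'.1 ∈ (I : Set ℕ).pi usets := by
      intro m hm
      have hmI : m ≤ I.sup id := Finset.le_sup (f := id) hm
      rw [hcoord m (by omega)]
      exact (hIu m hm).2
    have hW' : p'.1 ∈ W := hIsub hmem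
    have hV' : p' ∈ V := by
      rw [← hWV]
      exact hW'
    have := hVsub hV'
    rw [Set.mem_preimage, Metric.mem_ball, Real.dist_eq] at this
    exact this
  have h1 : sSup (uI '' G.through ((p.1 ℓ).1)) ≤ uI p + ε / 3 :=
    csSup_le ((G.through_nonempty _).image uI) (by
      rintro x ⟨p', hp', rfl⟩
      have := abs_lt.1 (key p' hp')
      linarith [this.2])
  have h2 : uI p - ε / 3 ≤ sInf (uI '' G.through ((p.1 ℓ).1)) :=
    le_csInf ((G.through_nonempty _).image uI) (by
      rintro x ⟨p', hp', rfl⟩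
      have := abs_lt.1 (key p' hp')
      linarith [this.1])
  rw [Real.dist_eq, sub_zero, abs_of_nonneg (G.osc_nonneg hC _)]
  rw [osc]
  linarith

lemma osc_integral_tendsto [Countable S] {μ : G.Profile → Measure G.Play}
    (hμ : G.IsInducedMeasure μ) {uI : G.Play → ℝ} {C : ℝ} (hcont : Continuous uI)
    (hC : ∀ p, |uI p| ≤ C) (τ : G.Profile) (s : S) :
    Filter.Tendsto (fun ℓ : ℕ => ∫ p in G.through s, G.osc uI ((p.1 ℓ).1) ∂(μ τ))
      Filter.atTop (nhds 0) := by
  haveI := hμ.1 τ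
  have h := MeasureTheory.tendsto_integral_of_dominated_convergence
    (μ := (μ τ).restrict (G.through s))
    (F := fun (ℓ : ℕ) (p : G.Play) => G.osc uI ((p.1 ℓ).1)) (f := fun _ => 0)
    (bound := fun _ => 2 * C)
    (fun ℓ => (G.measurable_stateFn (G.osc uI) ℓ).aestronglyMeasurable)
    (MeasureTheory.integrable_const _)
    (fun ℓ => Filter.Eventually.of_forall fun p => by
      rw [Real.norm_eq_abs, abs_of_nonneg (G.osc_nonneg hC _)]
      exact G.osc_le hC _)
    (Filter.Eventually.of_forall fun p => G.osc_coord_tendsto hcont hC p)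
  rwa [MeasureTheory.integral_zero] at h

/-! ### Optimal strategies -/

noncomputable def optStrat (E : G.Profile → S → N → ℝ) (i : N) : G.Strat i :=
  ⟨fun z => if G.ctrl z = i then G.bestAct (G.lval E i) z else G.fwdA z, by
    intro z hz
    dsimp only
    rw [if_pos hz]
    exact G.bestAct_mem _ z⟩

noncomputable def optOpp (E : G.Profile → S → N → ℝ) (i : N) : G.Profile := fun _ =>
  ⟨fun z => if G.ctrl z = i then G.fwdA z else G.worstAct (G.lval E i) z, by
    intro z _
    dsimp only
    split_ifs
    · exact G.fwdA_mem z
    · exact G.worstAct_mem _ z⟩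

section Main

variable [Countable S] {μ : G.Profile → Measure G.Play} {u : N → G.Play → ℝ}
  {E : G.Profile → S → N → ℝ} {i : N} {C : ℝ}
  (hμ : G.IsInducedMeasure μ) (hE : G.IsSubgamePayoff μ u E)
  (hui : Measurable (u i)) (hC : ∀ p, |u i p| ≤ C) (hcont : Continuous (u i))

include hμ hE hui hC hcont

lemma lval_le_E_opt (τo : G.Profile) (s : S) :
    G.lval E i s ≤ E (G.comb i (G.optStrat E i) τo) s i := by
  set σ := G.comb i (G.optStrat E i) τo with hσ
  set τ := G.reachTo s σ with hτ
  haveI := hμ.1 τ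
  have hagree : ∀ z, Relation.ReflTransGen G.step s z → G.playFun τ z = G.playFun σ z :=
    fun z hz => G.reachTo_agree s σ hz
  have hb : ∀ t, Relation.ReflTransGen G.step s t →
      G.lval E i t ≤ G.qsum t (G.playFun τ t) (G.lval E i) := by
    intro t ht
    rw [hτ, G.reachTo_agree s σ ht, hσ, G.playFun_comb]
    by_cases hc : G.ctrl t = i
    · rw [if_pos hc]
      have hopt : (G.optStrat E i).1 t = G.bestAct (G.lval E i) t := by
        show (if _ then _ else _) = _
        rw [if_pos hc]
      rw [hopt]
      exact G.lval_le_qsum_best hμ hE hui hC t hc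
    · rw [if_neg hc]
      exact G.lval_le_qsum_not_ctrl hμ hE hui hC t hc (G.playFun_mem_act τo t)
  have hEs := hE σ τ s i hagree
  have hwpos := G.meas_reachTo_toReal_pos hμ σ s
  rw [← hτ] at hwpos
  have hstepn : ∀ ℓ : ℕ, G.depth s ≤ ℓ →
      G.lval E i s * (μ τ (G.through s)).toReal ≤ (∫ p in G.through s, u i p ∂(μ τ)) +
        ∫ p in G.through s, G.osc (u i) ((p.1 ℓ).1) ∂(μ τ) := by
    intro ℓ hℓ
    have h1 := G.phi_lb hμ hE hui hC τ s hb (ℓ - G.depth s)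
    rw [Nat.add_sub_cancel' hℓ] at h1
    have h2 := G.integral_osc_bound hμ hE hui hC τ s hℓ
    have h3 := abs_le.1 h2
    linarith [h3.1]
  have hosc := G.osc_integral_tendsto hμ hcont hC τ s
  have hlim : Filter.Tendsto
      (fun ℓ : ℕ => (∫ p in G.through s, u i p ∂(μ τ)) +
        ∫ p in G.through s, G.osc (u i) ((p.1 ℓ).1) ∂(μ τ))
      Filter.atTop (nhds ((∫ p in G.through s, u i p ∂(μ τ)) + 0)) :=
    Filter.Tendsto.add tendsto_const_nhds hosc
  rw [add_zero] at hlim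
  have hfin : G.lval E i s * (μ τ (G.through s)).toReal ≤
      ∫ p in G.through s, u i p ∂(μ τ) :=
    ge_of_tendsto hlim (Filter.eventually_atTop.2 ⟨G.depth s, fun ℓ hℓ => hstepn ℓ hℓ⟩)
  rw [hEs] at hfin
  exact le_of_mul_le_mul_right hfin hwpos

lemma E_opt_le_lval (τi : G.Strat i) (s : S) :
    E (G.comb i τi (G.optOpp E i)) s i ≤ G.lval E i s := by
  set σ := G.comb i τi (G.optOpp E i) with hσ
  set τ := G.reachTo s σ with hτ
  haveI := hμ.1 τ
  have hagree : ∀ z, Relation.ReflTransGen G.step s z → G.playFun τ z = G.playFun σ z :=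
    fun z hz => G.reachTo_agree s σ hz
  have hb : ∀ t, Relation.ReflTransGen G.step s t →
      G.qsum t (G.playFun τ t) (G.lval E i) ≤ G.lval E i t := by
    intro t ht
    rw [hτ, G.reachTo_agree s σ ht, hσ, G.playFun_comb]
    by_cases hc : G.ctrl t = i
    · rw [if_pos hc]
      exact G.qsum_le_lval hμ hE hui hC t hc (τi.2 t hc)
    · rw [if_neg hc]
      have hopt : G.playFun (G.optOpp E i) t = G.worstAct (G.lval E i) t := by
        show (if _ then _ else _) = _
        rw [if_neg hc]
      rw [hopt]
      exact G.qsum_worst_le_lval hμ hE hui hC t hc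
  have hEs := hE σ τ s i hagree
  have hwpos := G.meas_reachTo_toReal_pos hμ σ s
  rw [← hτ] at hwpos
  have hstepn : ∀ ℓ : ℕ, G.depth s ≤ ℓ →
      (∫ p in G.through s, u i p ∂(μ τ)) ≤
        G.lval E i s * (μ τ (G.through s)).toReal +
        ∫ p in G.through s, G.osc (u i) ((p.1 ℓ).1) ∂(μ τ) := by
    intro ℓ hℓ
    have h1 := G.phi_ub hμ hE hui hC τ s hb (ℓ - G.depth s)
    rw [Nat.add_sub_cancel' hℓ] at h1
    have h2 := G.integral_osc_bound hμ hE hui hC τ s hℓ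
    have h3 := abs_le.1 h2
    linarith [h3.2]
  have hosc := G.osc_integral_tendsto hμ hcont hC τ s
  have hlim : Filter.Tendsto
      (fun ℓ : ℕ => G.lval E i s * (μ τ (G.through s)).toReal +
        ∫ p in G.through s, G.osc (u i) ((p.1 ℓ).1) ∂(μ τ))
      Filter.atTop (nhds (G.lval E i s * (μ τ (G.through s)).toReal + 0)) :=
    Filter.Tendsto.add tendsto_const_nhds hosc
  rw [add_zero] at hlim
  have hfin : (∫ p in G.through s, u i p ∂(μ τ)) ≤
      G.lval E i s * (μ τ (G.through s)).toReal :=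
    ge_of_tendsto hlim (Filter.eventually_atTop.2 ⟨G.depth s, fun ℓ hℓ => hstepn ℓ hℓ⟩)
  rw [hEs] at hfin
  exact le_of_mul_le_mul_right hfin hwpos

end Main


end PGame


/-- **Existence of subgame values and subgame-perfect optimal strategies**
(Lemma 2): in a multi-player perfect-information game with probabilistic
transitions, countable state space, nonempty finite action sets, and bounded
continuous payoff functions, every player `i` has a strategy `σ*_i` and his
opponents have a joint strategy profile `σ*_{-i}` such that for every state `s`,
every opponent profile `τ_{-i}` and every strategy `τ_i` of player `i`:
`u_i(σ*_i, τ_{-i} | s) ≥ u_i(σ*_i, σ*_{-i} | s) ≥ u_i(τ_i, σ*_{-i} | s)`.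
In particular, every zero-sum subgame `G_i(s)` has a value:
`sup_{τ_i} inf_{τ_{-i}} u_i(τ_i,τ_{-i}|s) = inf_{τ_{-i}} sup_{τ_i} u_i(τ_i,τ_{-i}|s)`. -/
theorem exists_subgame_optimal_strategies
    {N S A : Type*} [Finite N] [Countable S]
    (hN : 2 ≤ Nat.card N)
    (G : PGame N S A) (u : N → G.Play → ℝ)
    (hu_bdd : ∀ i : N, ∃ C : ℝ, ∀ p : G.Play, |u i p| ≤ C)
    (hu_cont : ∀ i : N, Continuous (u i))
    (μ : G.Profile → MeasureTheory.Measure G.Play)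
    (hμ : G.IsInducedMeasure μ)
    (E : G.Profile → S → N → ℝ)
    (hE : G.IsSubgamePayoff μ u E) :
    ∀ i : N, ∃ (σi : G.Strat i) (σo : G.Profile),
      (∀ (s : S) (τo : G.Profile) (τi : G.Strat i),
          E (G.comb i σi σo) s i ≤ E (G.comb i σi τo) s i ∧
          E (G.comb i τi σo) s i ≤ E (G.comb i σi σo) s i) ∧
      (∀ s : S,
          (⨆ τi : G.Strat i, ⨅ τo : G.Profile, E (G.comb i τi τo) s i) =
            (⨅ τo : G.Profile, ⨆ τi : G.Strat i, E (G.comb i τi τo) s i)) := by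
  intro i
  obtain ⟨C, hC⟩ := hu_bdd i
  have hui : Measurable (u i) := (hu_cont i).measurable
  have hcont := hu_cont i
  refine ⟨G.optStrat E i, G.optOpp E i, ?_, ?_⟩
  · intro s τo τi
    have hval : E (G.comb i (G.optStrat E i) (G.optOpp E i)) s i = G.lval E i s :=
      le_antisymm (G.E_opt_le_lval hμ hE hui hC hcont (G.optStrat E i) s)
        (G.lval_le_E_opt hμ hE hui hC hcont (G.optOpp E i) s)
    constructor
    · rw [hval]
      exact G.lval_le_E_opt hμ hE hui hC hcont τo s
    · rw [hval]
      exact G.E_opt_le_lval hμ hE hui hC hcont τi s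
  · intro s
    have hbAbove : ∀ τo : G.Profile,
        BddAbove (Set.range fun τi : G.Strat i => E (G.comb i τi τo) s i) := fun τo =>
      ⟨C, by rintro x ⟨τi', rfl⟩; exact (abs_le.1 (G.abs_E_le hμ hE hui hC _ s)).2⟩
    apply le_antisymm
    · refine le_ciInf fun τo => ciSup_le fun τi => ?_
      exact le_trans (ciInf_le (G.bddBelow_inner hμ hE hui hC τi s) τo)
        (le_ciSup (hbAbove τo) τi)
    · refine le_trans (ciInf_le ?_ (G.optOpp E i)) ?_
      · refine ⟨-C, ?_⟩
        rintro x ⟨τo, rfl⟩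
        exact le_trans (abs_le.1 (G.abs_E_le hμ hE hui hC (G.comb i (G.dflt i) τo) s)).1
          (le_ciSup (hbAbove τo) (G.dflt i))
      · exact ciSup_le fun τi => (G.E_opt_le_lval hμ hE hui hC hcont τi s)
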